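/- arXiv:2110.10507 — 4 statements merged into one kernel-verified Lean document; each statement's English description precedes it below -/
import Mathlib

section
/- Let ρ, u₁, u₂, u₃, T : ℝ³ × ℝ → ℝ be twice continuously differentiable fields with ρ > 0 and T > 0 everywhere, and suppose they solve the Eulerian model ∂q/∂t + Σ_{j=1}^{3} ∂f_j/∂x_j = Σ_{j=1}^{3} ∂/∂x_j (ν ∂q/∂x_j), where ν = αμ/ρ with constants α > 0 and μ > 0. Then the following pointwise entropy identity holds at every point: ∂S/∂t + Σ_{j=1}^{3} ∂F_j/∂x_j = Σ_{j=1}^{3} ∂/∂x_j (ν ∂S/∂x_j) − Σ_{j=1}^{3} ν (∂w/∂x_j)ᵀ M(v) (∂w/∂x_j); in particular, since M(v) is positive semidefinite and ν > 0, ∂S/∂t + Σ_{j=1}^{3} ∂F_j/∂x_j ≤ Σ_{j=1}^{3} ∂/∂x_j (ν ∂S/∂x_j). -/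
open Matrix

noncomputable section

/-- Entropy variables `w(v)` for the perfect gas with `s = c_v log T - R log ρ`,
`h = c_p T`, `c_p = c_v + R`:
`w = (h/T - s - |u|²/(2T), u₁/T, u₂/T, u₃/T, -1/T)`. -/
def entropyVars (R cv ρ u₁ u₂ u₃ T : ℝ) : Fin 5 → ℝ :=
  ![((cv + R) * T) / T - (cv * Real.log T - R * Real.log ρ)
      - (u₁ ^ 2 + u₂ ^ 2 + u₃ ^ 2) / (2 * T),
    u₁ / T, u₂ / T, u₃ / T, -(1 / T)]

/-- The symmetric 5×5 change-of-variables Jacobian `dq/dw` expressed in primitive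
variables `v = (ρ, u₁, u₂, u₃, T)`, with gas constant `R` and heat capacity at
constant pressure `cp`. -/
def Mmat (R cp ρ u₁ u₂ u₃ T : ℝ) : Matrix (Fin 5) (Fin 5) ℝ :=
  !![ρ / R, ρ * u₁ / R, ρ * u₂ / R, ρ * u₃ / R,
       ρ * (-2 * R * T + (u₁ ^ 2 + u₂ ^ 2 + u₃ ^ 2) + 2 * T * cp) / (2 * R);
     ρ * u₁ / R, ρ * (T + u₁ ^ 2 / R), ρ * u₁ * u₂ / R, ρ * u₁ * u₃ / R,
       ρ * u₁ * ((u₁ ^ 2 + u₂ ^ 2 + u₃ ^ 2) + 2 * T * cp) / (2 * R);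
     ρ * u₂ / R, ρ * u₁ * u₂ / R, ρ * (T + u₂ ^ 2 / R), ρ * u₂ * u₃ / R,
       ρ * u₂ * ((u₁ ^ 2 + u₂ ^ 2 + u₃ ^ 2) + 2 * T * cp) / (2 * R);
     ρ * u₃ / R, ρ * u₁ * u₃ / R, ρ * u₂ * u₃ / R, ρ * (T + u₃ ^ 2 / R),
       ρ * u₃ * ((u₁ ^ 2 + u₂ ^ 2 + u₃ ^ 2) + 2 * T * cp) / (2 * R);
     ρ * (-2 * R * T + (u₁ ^ 2 + u₂ ^ 2 + u₃ ^ 2) + 2 * T * cp) / (2 * R),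
       ρ * u₁ * ((u₁ ^ 2 + u₂ ^ 2 + u₃ ^ 2) + 2 * T * cp) / (2 * R),
       ρ * u₂ * ((u₁ ^ 2 + u₂ ^ 2 + u₃ ^ 2) + 2 * T * cp) / (2 * R),
       ρ * u₃ * ((u₁ ^ 2 + u₂ ^ 2 + u₃ ^ 2) + 2 * T * cp) / (2 * R),
       ρ * ((u₁ ^ 2 + u₂ ^ 2 + u₃ ^ 2) ^ 2
            + 4 * T * cp * (-(R * T) + (u₁ ^ 2 + u₂ ^ 2 + u₃ ^ 2) + T * cp)) / (4 * R)]

/-- Partial derivative in the spatial direction `x_j` of a scalar field on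
`ℝ³ × ℝ` (space × time). -/
def pd (j : Fin 3) (f : (Fin 3 → ℝ) × ℝ → ℝ) (p : (Fin 3 → ℝ) × ℝ) : ℝ :=
  deriv (fun s => f (Function.update p.1 j s, p.2)) (p.1 j)

/-- Partial derivative in time of a scalar field on `ℝ³ × ℝ` (space × time). -/
def pt (f : (Fin 3 → ℝ) × ℝ → ℝ) (p : (Fin 3 → ℝ) × ℝ) : ℝ :=
  deriv (fun s => f (p.1, s)) p.2

/-- Conservative variables `q(v) = (ρ, ρu₁, ρu₂, ρu₃, ρE)`, `E = c_v T + |u|²/2`. -/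
def consVars (cv ρ u₁ u₂ u₃ T : ℝ) : Fin 5 → ℝ :=
  ![ρ, ρ * u₁, ρ * u₂, ρ * u₃, ρ * (cv * T + (u₁ ^ 2 + u₂ ^ 2 + u₃ ^ 2) / 2)]

/-- Inviscid (Euler) flux in direction `x_j`, with `p = ρRT`, `E = c_v T + |u|²/2`. -/
def invFlux (R cv : ℝ) (j : Fin 3) (ρ u₁ u₂ u₃ T : ℝ) : Fin 5 → ℝ :=
  ![ρ * ![u₁, u₂, u₃] j,
    ρ * ![u₁, u₂, u₃] j * u₁ + (if j = 0 then ρ * R * T else 0),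
    ρ * ![u₁, u₂, u₃] j * u₂ + (if j = 1 then ρ * R * T else 0),
    ρ * ![u₁, u₂, u₃] j * u₃ + (if j = 2 then ρ * R * T else 0),
    ![u₁, u₂, u₃] j * (ρ * (cv * T + (u₁ ^ 2 + u₂ ^ 2 + u₃ ^ 2) / 2) + ρ * R * T)]


abbrev Pt := (Fin 3 → ℝ) × ℝ

/-- `D γ x f a` : the scalar field `f` composed with the curve `γ` has derivative `a` at `x`. -/
def D (γ : ℝ → Pt) (x : ℝ) (f : Pt → ℝ) (a : ℝ) : Prop :=
  HasDerivAt (fun s => f (γ s)) a x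

namespace D
variable {γ : ℝ → Pt} {x : ℝ} {f g : Pt → ℝ} {a b : ℝ}

theorem const (c : ℝ) : D γ x (fun _ => c) 0 := hasDerivAt_const x c
theorem add (hf : D γ x f a) (hg : D γ x g b) : D γ x (fun y => f y + g y) (a + b) :=
  HasDerivAt.add hf hg
theorem sub (hf : D γ x f a) (hg : D γ x g b) : D γ x (fun y => f y - g y) (a - b) :=
  HasDerivAt.sub hf hg
theorem neg (hf : D γ x f a) : D γ x (fun y => -f y) (-a) := HasDerivAt.neg hf
theorem mul (hf : D γ x f a) (hg : D γ x g b) :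
    D γ x (fun y => f y * g y) (a * g (γ x) + f (γ x) * b) := HasDerivAt.mul hf hg
theorem const_mul (c : ℝ) (hf : D γ x f a) : D γ x (fun y => c * f y) (c * a) :=
  HasDerivAt.const_mul c hf
theorem div (hf : D γ x f a) (hg : D γ x g b) (h : g (γ x) ≠ 0) :
    D γ x (fun y => f y / g y) ((a * g (γ x) - f (γ x) * b) / g (γ x) ^ 2) :=
  HasDerivAt.div hf hg h
theorem div_const (hf : D γ x f a) (c : ℝ) : D γ x (fun y => f y / c) (a / c) :=
  HasDerivAt.div_const hf c
theorem log (hf : D γ x f a) (h : f (γ x) ≠ 0) :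
    D γ x (fun y => Real.log (f y)) (a / f (γ x)) := HasDerivAt.log hf h
theorem pow (n : ℕ) (hf : D γ x f a) :
    D γ x (fun y => f y ^ n) ((n : ℝ) * f (γ x) ^ (n - 1) * a) := HasDerivAt.fun_pow hf n
theorem congr_fun (hf : D γ x f a) (h : ∀ y, f y = g y) : D γ x g a := by
  unfold D at *; simpa [funext h] using hf
end D

/-- Spatial slice through `p` in direction `j`. -/
def sl (p : Pt) (j : Fin 3) : ℝ → Pt := fun s => (Function.update p.1 j s, p.2)
/-- Time slice through `p`. -/
def tl (p : Pt) : ℝ → Pt := fun s => (p.1, s)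

@[simp] lemma sl_apply (p : Pt) (j : Fin 3) : sl p j (p.1 j) = p := by
  simp [sl, Function.update_eq_self]
@[simp] lemma tl_apply (p : Pt) : tl p p.2 = p := rfl

lemma pd_eq_of_D {p : Pt} {j : Fin 3} {f : Pt → ℝ} {a : ℝ}
    (h : D (sl p j) (p.1 j) f a) : pd j f p = a := HasDerivAt.deriv h

lemma pt_eq_of_D {p : Pt} {f : Pt → ℝ} {a : ℝ}
    (h : D (tl p) p.2 f a) : pt f p = a := HasDerivAt.deriv h

lemma hasDerivAt_sl (p : Pt) (j : Fin 3) (s : ℝ) :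
    HasDerivAt (sl p j) ((Pi.single j 1 : Fin 3 → ℝ), (0 : ℝ)) s := by
  have heq : sl p j = fun s : ℝ =>
      ((p.1 + (s - p.1 j) • (Pi.single j 1 : Fin 3 → ℝ), p.2) : Pt) := by
    funext s
    refine Prod.ext ?_ rfl
    funext i
    by_cases h : i = j <;> simp [sl, Function.update_apply, Pi.single_apply, h]
  rw [heq]
  have h1 : HasDerivAt (fun s : ℝ => p.1 + (s - p.1 j) • (Pi.single j 1 : Fin 3 → ℝ))
      (Pi.single j 1 : Fin 3 → ℝ) s := by
    simpa using (((hasDerivAt_id s).sub_const (p.1 j)).smul_const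
      (Pi.single j 1 : Fin 3 → ℝ)).const_add p.1
  exact h1.prodMk (hasDerivAt_const s p.2)

lemma hasDerivAt_tl (p : Pt) (s : ℝ) :
    HasDerivAt (tl p) ((0 : Fin 3 → ℝ), (1 : ℝ)) s :=
  (hasDerivAt_const s p.1).prodMk (hasDerivAt_id s)

/-- A differentiable field has a spatial partial derivative along the slice. -/
lemma D_sl {f : Pt → ℝ} {p : Pt} (j : Fin 3) (hf : DifferentiableAt ℝ f p) :
    D (sl p j) (p.1 j) f (pd j f p) := by
  have h0 : HasFDerivAt f (fderiv ℝ f p) (sl p j (p.1 j)) := by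
    rw [sl_apply]; exact hf.hasFDerivAt
  have h : D (sl p j) (p.1 j) f (fderiv ℝ f p ((Pi.single j 1 : Fin 3 → ℝ), (0 : ℝ))) :=
    h0.comp_hasDerivAt _ (hasDerivAt_sl p j (p.1 j))
  have he : pd j f p = fderiv ℝ f p ((Pi.single j 1 : Fin 3 → ℝ), (0 : ℝ)) := pd_eq_of_D h
  rw [he]; exact h

lemma D_tl {f : Pt → ℝ} {p : Pt} (hf : DifferentiableAt ℝ f p) :
    D (tl p) p.2 f (pt f p) := by
  have h0 : HasFDerivAt f (fderiv ℝ f p) (tl p p.2) := by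
    rw [tl_apply]; exact hf.hasFDerivAt
  have h : D (tl p) p.2 f (fderiv ℝ f p ((0 : Fin 3 → ℝ), (1 : ℝ))) :=
    h0.comp_hasDerivAt _ (hasDerivAt_tl p p.2)
  have he : pt f p = fderiv ℝ f p ((0 : Fin 3 → ℝ), (1 : ℝ)) := pt_eq_of_D h
  rw [he]; exact h

/-- For a `C²` field, the spatial partial derivative is a `C¹` (hence differentiable) field. -/
lemma contDiff_pd {f : Pt → ℝ} (j : Fin 3) (hf : ContDiff ℝ 2 f) :
    ContDiff ℝ 1 (fun p => pd j f p) := by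
  have heq : (fun p => pd j f p)
      = fun p => fderiv ℝ f p ((Pi.single j 1 : Fin 3 → ℝ), (0 : ℝ)) := by
    funext p
    have h0 : HasFDerivAt f (fderiv ℝ f p) (sl p j (p.1 j)) := by
      rw [sl_apply]; exact (hf.differentiable (by norm_num) p).hasFDerivAt
    exact pd_eq_of_D (h0.comp_hasDerivAt _ (hasDerivAt_sl p j (p.1 j)))
  rw [heq]
  exact (hf.fderiv_right (m := 1) (le_refl _)).clm_apply contDiff_const

section Chain

theorem D.val_eq {γ : ℝ → Pt} {x : ℝ} {f : Pt → ℝ} {a b : ℝ}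
    (hf : D γ x f a) (h : a = b) : D γ x f b := h ▸ hf

theorem D.mul_const {γ : ℝ → Pt} {x : ℝ} {f : Pt → ℝ} {a : ℝ}
    (hf : D γ x f a) (c : ℝ) : D γ x (fun y => f y * c) (a * c) :=
  HasDerivAt.mul_const hf c

variable {γ : ℝ → Pt} {x : ℝ} {ρ u₁ u₂ u₃ T a b : Pt → ℝ}
  {R cv dρ d1 d2 d3 dT da db : ℝ}

/-- ρ·a -/
lemma c_P1 (hρ : D γ x ρ dρ) (ha : D γ x a da) :
    D γ x (fun y => ρ y * a y) (dρ * a (γ x) + ρ (γ x) * da) := hρ.mul ha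

/-- ρ·a·b -/
lemma c_P2 (hρ : D γ x ρ dρ) (ha : D γ x a da) (hb : D γ x b db) :
    D γ x (fun y => ρ y * a y * b y)
      ((dρ * a (γ x) + ρ (γ x) * da) * b (γ x) + ρ (γ x) * a (γ x) * db) :=
  (hρ.mul ha).mul hb

/-- ρ·a·b + ρRT -/
lemma c_P2p (hρ : D γ x ρ dρ) (ha : D γ x a da) (hb : D γ x b db) (hT : D γ x T dT) :
    D γ x (fun y => ρ y * a y * b y + ρ y * R * T y)
      ((dρ * a (γ x) + ρ (γ x) * da) * b (γ x) + ρ (γ x) * a (γ x) * db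
        + (dρ * R * T (γ x) + ρ (γ x) * R * dT)) :=
  by
  have base : D γ x (fun y => ρ y * R * T y) (dρ * R * T (γ x) + ρ (γ x) * R * dT) :=
    ((hρ.mul_const R).mul hT).val_eq (by ring)
  exact ((hρ.mul ha).mul hb).add base

/-- total energy density ρ(cv T + |u|²/2) -/
lemma c_E (hρ : D γ x ρ dρ) (h1 : D γ x u₁ d1) (h2 : D γ x u₂ d2) (h3 : D γ x u₃ d3)
    (hT : D γ x T dT) :
    D γ x (fun y => ρ y * (cv * T y + (u₁ y ^ 2 + u₂ y ^ 2 + u₃ y ^ 2) / 2))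
      (dρ * (cv * T (γ x) + (u₁ (γ x) ^ 2 + u₂ (γ x) ^ 2 + u₃ (γ x) ^ 2) / 2)
        + ρ (γ x) * (cv * dT + (u₁ (γ x) * d1 + u₂ (γ x) * d2 + u₃ (γ x) * d3))) :=
  (hρ.mul ((hT.const_mul cv).add
    ((((h1.pow 2).add (h2.pow 2)).add (h3.pow 2)).div_const 2))).val_eq (by push_cast; ring)

/-- energy flux a(ρE + ρRT) -/
lemma c_Ef (hρ : D γ x ρ dρ) (h1 : D γ x u₁ d1) (h2 : D γ x u₂ d2) (h3 : D γ x u₃ d3)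
    (hT : D γ x T dT) (ha : D γ x a da) :
    D γ x (fun y => a y * (ρ y * (cv * T y + (u₁ y ^ 2 + u₂ y ^ 2 + u₃ y ^ 2) / 2)
        + ρ y * R * T y))
      (da * (ρ (γ x) * (cv * T (γ x) + (u₁ (γ x) ^ 2 + u₂ (γ x) ^ 2 + u₃ (γ x) ^ 2) / 2)
          + ρ (γ x) * R * T (γ x))
        + a (γ x) * (dρ * (cv * T (γ x) + (u₁ (γ x) ^ 2 + u₂ (γ x) ^ 2 + u₃ (γ x) ^ 2) / 2)
          + ρ (γ x) * (cv * dT + (u₁ (γ x) * d1 + u₂ (γ x) * d2 + u₃ (γ x) * d3))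
          + (dρ * R * T (γ x) + ρ (γ x) * R * dT))) :=
  by
  have base : D γ x (fun y => ρ y * R * T y) (dρ * R * T (γ x) + ρ (γ x) * R * dT) :=
    ((hρ.mul_const R).mul hT).val_eq (by ring)
  exact (ha.mul ((c_E hρ h1 h2 h3 hT).add base)).val_eq (by ring)

/-- mathematical entropy −ρ(cv log T − R log ρ) -/
lemma c_S (hρ : D γ x ρ dρ) (hT : D γ x T dT)
    (hρ0 : ρ (γ x) ≠ 0) (hT0 : T (γ x) ≠ 0) :
    D γ x (fun y => -(ρ y * (cv * Real.log (T y) - R * Real.log (ρ y))))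
      (-(dρ * (cv * Real.log (T (γ x)) - R * Real.log (ρ (γ x)))
        + cv * ρ (γ x) * dT / T (γ x) - R * dρ)) :=
  ((hρ.mul (((hT.log hT0).const_mul cv).sub
    ((hρ.log hρ0).const_mul R))).neg).val_eq (by field_simp; ring)

/-- entropy flux −ρ a (cv log T − R log ρ) -/
lemma c_F (hρ : D γ x ρ dρ) (ha : D γ x a da) (hT : D γ x T dT)
    (hρ0 : ρ (γ x) ≠ 0) (hT0 : T (γ x) ≠ 0) :
    D γ x (fun y => -(ρ y * a y * (cv * Real.log (T y) - R * Real.log (ρ y))))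
      (-((dρ * a (γ x) + ρ (γ x) * da) * (cv * Real.log (T (γ x)) - R * Real.log (ρ (γ x)))
        + cv * ρ (γ x) * a (γ x) * dT / T (γ x) - R * a (γ x) * dρ)) :=
  (((hρ.mul ha).mul (((hT.log hT0).const_mul cv).sub
    ((hρ.log hρ0).const_mul R))).neg).val_eq (by field_simp; ring)

/-- first entropy variable -/
lemma c_W0 (hρ : D γ x ρ dρ) (h1 : D γ x u₁ d1) (h2 : D γ x u₂ d2) (h3 : D γ x u₃ d3)
    (hT : D γ x T dT) (hρ0 : ρ (γ x) ≠ 0) (hT0 : T (γ x) ≠ 0) :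
    D γ x (fun y => ((cv + R) * T y) / T y - (cv * Real.log (T y) - R * Real.log (ρ y))
        - (u₁ y ^ 2 + u₂ y ^ 2 + u₃ y ^ 2) / (2 * T y))
      (R * dρ / ρ (γ x) - cv * dT / T (γ x)
        - (u₁ (γ x) * d1 + u₂ (γ x) * d2 + u₃ (γ x) * d3) / T (γ x)
        + (u₁ (γ x) ^ 2 + u₂ (γ x) ^ 2 + u₃ (γ x) ^ 2) * dT / (2 * T (γ x) ^ 2)) := by
  have h2T0 : (2 : ℝ) * T (γ x) ≠ 0 := by
    simp [hT0]
  exact ((((hT.const_mul (cv + R)).div hT hT0).sub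
    (((hT.log hT0).const_mul cv).sub ((hρ.log hρ0).const_mul R))).sub
    (((((h1.pow 2).add (h2.pow 2)).add (h3.pow 2)).div (hT.const_mul 2) h2T0))).val_eq
    (by field_simp; ring)

/-- velocity entropy variable u/T -/
lemma c_Wi (ha : D γ x a da) (hT : D γ x T dT) (hT0 : T (γ x) ≠ 0) :
    D γ x (fun y => a y / T y) ((da * T (γ x) - a (γ x) * dT) / T (γ x) ^ 2) :=
  ha.div hT hT0

/-- last entropy variable −1/T -/
lemma c_W4 (hT : D γ x T dT) (hT0 : T (γ x) ≠ 0) :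
    D γ x (fun y => -(1 / T y)) (dT / T (γ x) ^ 2) :=
  (((D.const 1).div hT hT0).neg).val_eq (by ring)

end Chain

section Components
variable (R cv r v1 v2 v3 T : ℝ)

lemma consVars_0 : consVars cv r v1 v2 v3 T 0 = r := rfl
lemma consVars_1 : consVars cv r v1 v2 v3 T 1 = r * v1 := rfl
lemma consVars_2 : consVars cv r v1 v2 v3 T 2 = r * v2 := rfl
lemma consVars_3 : consVars cv r v1 v2 v3 T 3 = r * v3 := rfl
lemma consVars_4 : consVars cv r v1 v2 v3 T 4
    = r * (cv * T + (v1 ^ 2 + v2 ^ 2 + v3 ^ 2) / 2) := rfl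

lemma entropyVars_0 : entropyVars R cv r v1 v2 v3 T 0
    = ((cv + R) * T) / T - (cv * Real.log T - R * Real.log r)
      - (v1 ^ 2 + v2 ^ 2 + v3 ^ 2) / (2 * T) := rfl
lemma entropyVars_1 : entropyVars R cv r v1 v2 v3 T 1 = v1 / T := rfl
lemma entropyVars_2 : entropyVars R cv r v1 v2 v3 T 2 = v2 / T := rfl
lemma entropyVars_3 : entropyVars R cv r v1 v2 v3 T 3 = v3 / T := rfl
lemma entropyVars_4 : entropyVars R cv r v1 v2 v3 T 4 = -(1 / T) := rfl

lemma invFlux_00 : invFlux R cv 0 r v1 v2 v3 T 0 = r * v1 := by simp [invFlux]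
lemma invFlux_01 : invFlux R cv 0 r v1 v2 v3 T 1 = r * v1 * v1 + r * R * T := by
  simp [invFlux]
lemma invFlux_02 : invFlux R cv 0 r v1 v2 v3 T 2 = r * v1 * v2 := by simp [invFlux]
lemma invFlux_03 : invFlux R cv 0 r v1 v2 v3 T 3 = r * v1 * v3 := by simp [invFlux]
lemma invFlux_04 : invFlux R cv 0 r v1 v2 v3 T 4
    = v1 * (r * (cv * T + (v1 ^ 2 + v2 ^ 2 + v3 ^ 2) / 2) + r * R * T) := by simp [invFlux]

lemma invFlux_10 : invFlux R cv 1 r v1 v2 v3 T 0 = r * v2 := by simp [invFlux]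
lemma invFlux_11 : invFlux R cv 1 r v1 v2 v3 T 1 = r * v2 * v1 := by simp [invFlux]
lemma invFlux_12 : invFlux R cv 1 r v1 v2 v3 T 2 = r * v2 * v2 + r * R * T := by
  simp [invFlux]
lemma invFlux_13 : invFlux R cv 1 r v1 v2 v3 T 3 = r * v2 * v3 := by simp [invFlux]
lemma invFlux_14 : invFlux R cv 1 r v1 v2 v3 T 4
    = v2 * (r * (cv * T + (v1 ^ 2 + v2 ^ 2 + v3 ^ 2) / 2) + r * R * T) := by simp [invFlux]

lemma invFlux_20 : invFlux R cv 2 r v1 v2 v3 T 0 = r * v3 := by simp [invFlux]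
lemma invFlux_21 : invFlux R cv 2 r v1 v2 v3 T 1 = r * v3 * v1 := by simp [invFlux]
lemma invFlux_22 : invFlux R cv 2 r v1 v2 v3 T 2 = r * v3 * v2 := by simp [invFlux]
lemma invFlux_23 : invFlux R cv 2 r v1 v2 v3 T 3 = r * v3 * v3 + r * R * T := by
  simp [invFlux]
lemma invFlux_24 : invFlux R cv 2 r v1 v2 v3 T 4
    = v3 * (r * (cv * T + (v1 ^ 2 + v2 ^ 2 + v3 ^ 2) / 2) + r * R * T) := by simp [invFlux]

end Components

section Algebra
variable {R cv r v1 v2 v3 T dρ d1 d2 d3 dT : ℝ}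

/-- `w · dq = dS` -/
lemma ALG1 (hr : r ≠ 0) (hT : T ≠ 0) :
    (((cv + R) * T) / T - (cv * Real.log T - R * Real.log r)
        - (v1 ^ 2 + v2 ^ 2 + v3 ^ 2) / (2 * T)) * dρ
      + v1 / T * (dρ * v1 + r * d1)
      + v2 / T * (dρ * v2 + r * d2)
      + v3 / T * (dρ * v3 + r * d3)
      + (-(1 / T)) * (dρ * (cv * T + (v1 ^ 2 + v2 ^ 2 + v3 ^ 2) / 2)
          + r * (cv * dT + (v1 * d1 + v2 * d2 + v3 * d3)))
    = -(dρ * (cv * Real.log T - R * Real.log r) + cv * r * dT / T - R * dρ) := by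
  field_simp
  ring

/-- `w · df_a = dF_a` for the flux in a direction with normal velocity `a`;
`pk` is `1` for the momentum slot carrying the pressure and `0` otherwise. -/
lemma ALG2 {a da p1 p2 p3 : ℝ} (hr : r ≠ 0) (hT : T ≠ 0) :
    (((cv + R) * T) / T - (cv * Real.log T - R * Real.log r)
        - (v1 ^ 2 + v2 ^ 2 + v3 ^ 2) / (2 * T)) * (dρ * a + r * da)
      + v1 / T * ((dρ * a + r * da) * v1 + r * a * d1 + p1 * (dρ * R * T + r * R * dT))
      + v2 / T * ((dρ * a + r * da) * v2 + r * a * d2 + p2 * (dρ * R * T + r * R * dT))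
      + v3 / T * ((dρ * a + r * da) * v3 + r * a * d3 + p3 * (dρ * R * T + r * R * dT))
      + (-(1 / T)) * (da * (r * (cv * T + (v1 ^ 2 + v2 ^ 2 + v3 ^ 2) / 2) + r * R * T)
          + a * (dρ * (cv * T + (v1 ^ 2 + v2 ^ 2 + v3 ^ 2) / 2)
            + r * (cv * dT + (v1 * d1 + v2 * d2 + v3 * d3)) + (dρ * R * T + r * R * dT)))
    = -((dρ * a + r * da) * (cv * Real.log T - R * Real.log r)
        + cv * r * a * dT / T - R * a * dρ)
      + (p1 * v1 + p2 * v2 + p3 * v3 - a) / T * (dρ * R * T + r * R * dT) := by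
  field_simp
  ring

end Algebra

section MatrixAlg
variable {R cv r v1 v2 v3 T dρ d1 d2 d3 dT : ℝ}

set_option maxHeartbeats 4000000 in
/-- `dw ⬝ (M dw) = Σ dw_k dq_k` for the concrete differentials. -/
lemma ALG3 (hR : R ≠ 0) (hr : r ≠ 0) (hT : T ≠ 0) :
    (![R * dρ / r - cv * dT / T - (v1 * d1 + v2 * d2 + v3 * d3) / T
          + (v1 ^ 2 + v2 ^ 2 + v3 ^ 2) * dT / (2 * T ^ 2),
        (d1 * T - v1 * dT) / T ^ 2, (d2 * T - v2 * dT) / T ^ 2,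
        (d3 * T - v3 * dT) / T ^ 2, dT / T ^ 2] : Fin 5 → ℝ) ⬝ᵥ
      (Mmat R (cv + R) r v1 v2 v3 T *ᵥ
        ![R * dρ / r - cv * dT / T - (v1 * d1 + v2 * d2 + v3 * d3) / T
          + (v1 ^ 2 + v2 ^ 2 + v3 ^ 2) * dT / (2 * T ^ 2),
        (d1 * T - v1 * dT) / T ^ 2, (d2 * T - v2 * dT) / T ^ 2,
        (d3 * T - v3 * dT) / T ^ 2, dT / T ^ 2])
    = (R * dρ / r - cv * dT / T - (v1 * d1 + v2 * d2 + v3 * d3) / T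
          + (v1 ^ 2 + v2 ^ 2 + v3 ^ 2) * dT / (2 * T ^ 2)) * dρ
      + (d1 * T - v1 * dT) / T ^ 2 * (dρ * v1 + r * d1)
      + (d2 * T - v2 * dT) / T ^ 2 * (dρ * v2 + r * d2)
      + (d3 * T - v3 * dT) / T ^ 2 * (dρ * v3 + r * d3)
      + dT / T ^ 2 * (dρ * (cv * T + (v1 ^ 2 + v2 ^ 2 + v3 ^ 2) / 2)
          + r * (cv * dT + (v1 * d1 + v2 * d2 + v3 * d3))) := by
  have hMw : (Mmat R (cv + R) r v1 v2 v3 T *ᵥ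
        ![R * dρ / r - cv * dT / T - (v1 * d1 + v2 * d2 + v3 * d3) / T
          + (v1 ^ 2 + v2 ^ 2 + v3 ^ 2) * dT / (2 * T ^ 2),
        (d1 * T - v1 * dT) / T ^ 2, (d2 * T - v2 * dT) / T ^ 2,
        (d3 * T - v3 * dT) / T ^ 2, dT / T ^ 2])
      = ![dρ, dρ * v1 + r * d1, dρ * v2 + r * d2, dρ * v3 + r * d3,
          dρ * (cv * T + (v1 ^ 2 + v2 ^ 2 + v3 ^ 2) / 2)
            + r * (cv * dT + (v1 * d1 + v2 * d2 + v3 * d3))] := by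
    funext k
    fin_cases k <;>
      · simp [Mmat, Matrix.mulVec, dotProduct, Fin.sum_univ_five]
        field_simp
        ring
  rw [hMw]
  simp [dotProduct, Fin.sum_univ_five]

set_option maxHeartbeats 4000000 in
/-- positive semidefiniteness of `M` via an explicit sum-of-squares decomposition. -/
lemma ALG4 (hR : 0 < R) (hcv : 0 < cv) (hr : 0 < r) (hT : 0 < T) (z : Fin 5 → ℝ) :
    0 ≤ z ⬝ᵥ (Mmat R (cv + R) r v1 v2 v3 T *ᵥ z) := by
  have key : z ⬝ᵥ (Mmat R (cv + R) r v1 v2 v3 T *ᵥ z)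
      = (r / R) * (z 0 + v1 * z 1 + v2 * z 2 + v3 * z 3
            + ((v1 ^ 2 + v2 ^ 2 + v3 ^ 2) + 2 * T * (cv + R) - 2 * R * T) / 2 * z 4) ^ 2
        + r * T * ((z 1 + v1 * z 4) ^ 2 + (z 2 + v2 * z 4) ^ 2 + (z 3 + v3 * z 4) ^ 2)
        + r * cv * T ^ 2 * z 4 ^ 2 := by
    simp [Mmat, Matrix.mulVec, dotProduct, Fin.sum_univ_five]
    field_simp
    ring
  rw [key]
  have h1 : 0 ≤ (r / R) * (z 0 + v1 * z 1 + v2 * z 2 + v3 * z 3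
      + ((v1 ^ 2 + v2 ^ 2 + v3 ^ 2) + 2 * T * (cv + R) - 2 * R * T) / 2 * z 4) ^ 2 :=
    mul_nonneg (div_nonneg hr.le hR.le) (sq_nonneg _)
  have h2 : 0 ≤ r * T * ((z 1 + v1 * z 4) ^ 2 + (z 2 + v2 * z 4) ^ 2 + (z 3 + v3 * z 4) ^ 2) :=
    mul_nonneg (mul_nonneg hr.le hT.le)
      (by positivity)
  have h3 : 0 ≤ r * cv * T ^ 2 * z 4 ^ 2 := by positivity
  linarith
end MatrixAlg

set_option maxHeartbeats 1000000 in
/-- pointwise entropy identity for the Eulerian model.  If the C²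
fields `ρ, u₁, u₂, u₃, T` (with `ρ > 0`, `T > 0`) solve
`∂q/∂t + Σ_j ∂f_j/∂x_j = Σ_j ∂/∂x_j (ν ∂q/∂x_j)` with `ν = αμ/ρ`, then at every
point `∂S/∂t + Σ_j ∂F_j/∂x_j = Σ_j ∂/∂x_j (ν ∂S/∂x_j) - Σ_j ν (∂w/∂x_j)ᵀ M(v) (∂w/∂x_j)`;
in particular `∂S/∂t + Σ_j ∂F_j/∂x_j ≤ Σ_j ∂/∂x_j (ν ∂S/∂x_j)`. -/
theorem eulerian_pointwise_entropy_identity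
    (R cv α μ : ℝ) (hR : 0 < R) (hcv : 0 < cv) (hα : 0 < α) (hμ : 0 < μ)
    (ρ u₁ u₂ u₃ T : (Fin 3 → ℝ) × ℝ → ℝ)
    (hρreg : ContDiff ℝ 2 ρ) (hu₁reg : ContDiff ℝ 2 u₁) (hu₂reg : ContDiff ℝ 2 u₂)
    (hu₃reg : ContDiff ℝ 2 u₃) (hTreg : ContDiff ℝ 2 T)
    (hρpos : ∀ p, 0 < ρ p) (hTpos : ∀ p, 0 < T p)
    (hpde : ∀ (k : Fin 5) (p : (Fin 3 → ℝ) × ℝ),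
      pt (fun p' => consVars cv (ρ p') (u₁ p') (u₂ p') (u₃ p') (T p') k) p
        + ∑ j : Fin 3,
            pd j (fun p' => invFlux R cv j (ρ p') (u₁ p') (u₂ p') (u₃ p') (T p') k) p
      = ∑ j : Fin 3,
          pd j (fun p' => (α * μ / ρ p') *
            pd j (fun p'' => consVars cv (ρ p'') (u₁ p'') (u₂ p'') (u₃ p'') (T p'') k) p') p) :
    ∀ p : (Fin 3 → ℝ) × ℝ,
      (pt (fun p' => -(ρ p' * (cv * Real.log (T p') - R * Real.log (ρ p')))) p
        + ∑ j : Fin 3,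
            pd j (fun p' => -(ρ p' * ![u₁ p', u₂ p', u₃ p'] j *
              (cv * Real.log (T p') - R * Real.log (ρ p')))) p
      = ∑ j : Fin 3,
          pd j (fun p' => (α * μ / ρ p') *
            pd j (fun p'' => -(ρ p'' * (cv * Real.log (T p'') - R * Real.log (ρ p'')))) p') p
        - ∑ j : Fin 3, (α * μ / ρ p) *
            ((fun k => pd j
                (fun p' => entropyVars R cv (ρ p') (u₁ p') (u₂ p') (u₃ p') (T p') k) p) ⬝ᵥ
              (Mmat R (cv + R) (ρ p) (u₁ p) (u₂ p) (u₃ p) (T p) *ᵥ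
                fun k => pd j
                  (fun p' => entropyVars R cv (ρ p') (u₁ p') (u₂ p') (u₃ p') (T p') k) p)))
      ∧
      (pt (fun p' => -(ρ p' * (cv * Real.log (T p') - R * Real.log (ρ p')))) p
        + ∑ j : Fin 3,
            pd j (fun p' => -(ρ p' * ![u₁ p', u₂ p', u₃ p'] j *
              (cv * Real.log (T p') - R * Real.log (ρ p')))) p
      ≤ ∑ j : Fin 3,
          pd j (fun p' => (α * μ / ρ p') *
            pd j (fun p'' => -(ρ p'' * (cv * Real.log (T p'') - R * Real.log (ρ p'')))) p') p) := by
  -- differentiability of the primitive fields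
  have hρd : Differentiable ℝ ρ := hρreg.differentiable (by norm_num)
  have hu₁d : Differentiable ℝ u₁ := hu₁reg.differentiable (by norm_num)
  have hu₂d : Differentiable ℝ u₂ := hu₂reg.differentiable (by norm_num)
  have hu₃d : Differentiable ℝ u₃ := hu₃reg.differentiable (by norm_num)
  have hTd : Differentiable ℝ T := hTreg.differentiable (by norm_num)
  have hrne : ∀ q : Pt, ρ q ≠ 0 := fun q => ne_of_gt (hρpos q)
  have hTne : ∀ q : Pt, T q ≠ 0 := fun q => ne_of_gt (hTpos q)
  -- D-facts for primitives along spatial slices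
  have Dρ : ∀ (q : Pt) (j : Fin 3), D (sl q j) (q.1 j) ρ (pd j ρ q) := fun q j => D_sl j (hρd q)
  have DU1 : ∀ (q : Pt) (j : Fin 3), D (sl q j) (q.1 j) u₁ (pd j u₁ q) := fun q j => D_sl j (hu₁d q)
  have DU2 : ∀ (q : Pt) (j : Fin 3), D (sl q j) (q.1 j) u₂ (pd j u₂ q) := fun q j => D_sl j (hu₂d q)
  have DU3 : ∀ (q : Pt) (j : Fin 3), D (sl q j) (q.1 j) u₃ (pd j u₃ q) := fun q j => D_sl j (hu₃d q)
  have DTe : ∀ (q : Pt) (j : Fin 3), D (sl q j) (q.1 j) T (pd j T q) := fun q j => D_sl j (hTd q)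
  -- D-facts for primitives along time slices
  have Dtρ : ∀ q : Pt, D (tl q) q.2 ρ (pt ρ q) := fun q => D_tl (hρd q)
  have DtU1 : ∀ q : Pt, D (tl q) q.2 u₁ (pt u₁ q) := fun q => D_tl (hu₁d q)
  have DtU2 : ∀ q : Pt, D (tl q) q.2 u₂ (pt u₂ q) := fun q => D_tl (hu₂d q)
  have DtU3 : ∀ q : Pt, D (tl q) q.2 u₃ (pt u₃ q) := fun q => D_tl (hu₃d q)
  have DtT : ∀ q : Pt, D (tl q) q.2 T (pt T q) := fun q => D_tl (hTd q)
  -- nonvanishing at slice base points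
  have hrs : ∀ (q : Pt) (j : Fin 3), ρ (sl q j (q.1 j)) ≠ 0 := fun q j => by
    rw [sl_apply]; exact hrne q
  have hTs : ∀ (q : Pt) (j : Fin 3), T (sl q j (q.1 j)) ≠ 0 := fun q j => by
    rw [sl_apply]; exact hTne q
  have hrt : ∀ q : Pt, ρ (tl q q.2) ≠ 0 := fun q => by rw [tl_apply]; exact hrne q
  have hTt : ∀ q : Pt, T (tl q q.2) ≠ 0 := fun q => by rw [tl_apply]; exact hTne q
  -- first-order derivative values of composite fields
  have pdS : ∀ (q : Pt) (j : Fin 3),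
      pd j (fun y => -(ρ y * (cv * Real.log (T y) - R * Real.log (ρ y)))) q
        = -(pd j ρ q * (cv * Real.log (T q) - R * Real.log (ρ q))
            + cv * ρ q * pd j T q / T q - R * pd j ρ q) := fun q j => by
    simpa only [sl_apply] using
      pd_eq_of_D (c_S (Dρ q j) (DTe q j) (hrs q j) (hTs q j))
  have ptS : ∀ q : Pt,
      pt (fun y => -(ρ y * (cv * Real.log (T y) - R * Real.log (ρ y)))) q
        = -(pt ρ q * (cv * Real.log (T q) - R * Real.log (ρ q))
            + cv * ρ q * pt T q / T q - R * pt ρ q) := fun q => by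
    simpa only [tl_apply] using
      pt_eq_of_D (c_S (Dtρ q) (DtT q) (hrt q) (hTt q))
  have pdRu1 : ∀ (q : Pt) (j : Fin 3), pd j (fun y => ρ y * u₁ y) q
      = pd j ρ q * u₁ q + ρ q * pd j u₁ q := fun q j => by
    simpa only [sl_apply] using pd_eq_of_D (c_P1 (Dρ q j) (DU1 q j))
  have pdRu2 : ∀ (q : Pt) (j : Fin 3), pd j (fun y => ρ y * u₂ y) q
      = pd j ρ q * u₂ q + ρ q * pd j u₂ q := fun q j => by
    simpa only [sl_apply] using pd_eq_of_D (c_P1 (Dρ q j) (DU2 q j))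
  have pdRu3 : ∀ (q : Pt) (j : Fin 3), pd j (fun y => ρ y * u₃ y) q
      = pd j ρ q * u₃ q + ρ q * pd j u₃ q := fun q j => by
    simpa only [sl_apply] using pd_eq_of_D (c_P1 (Dρ q j) (DU3 q j))
  have ptRu1 : ∀ q : Pt, pt (fun y => ρ y * u₁ y) q
      = pt ρ q * u₁ q + ρ q * pt u₁ q := fun q => by
    simpa only [tl_apply] using pt_eq_of_D (c_P1 (Dtρ q) (DtU1 q))
  have ptRu2 : ∀ q : Pt, pt (fun y => ρ y * u₂ y) q
      = pt ρ q * u₂ q + ρ q * pt u₂ q := fun q => by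
    simpa only [tl_apply] using pt_eq_of_D (c_P1 (Dtρ q) (DtU2 q))
  have ptRu3 : ∀ q : Pt, pt (fun y => ρ y * u₃ y) q
      = pt ρ q * u₃ q + ρ q * pt u₃ q := fun q => by
    simpa only [tl_apply] using pt_eq_of_D (c_P1 (Dtρ q) (DtU3 q))
  have pdQ4 : ∀ (q : Pt) (j : Fin 3),
      pd j (fun y => ρ y * (cv * T y + (u₁ y ^ 2 + u₂ y ^ 2 + u₃ y ^ 2) / 2)) q
        = pd j ρ q * (cv * T q + (u₁ q ^ 2 + u₂ q ^ 2 + u₃ q ^ 2) / 2)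
          + ρ q * (cv * pd j T q
            + (u₁ q * pd j u₁ q + u₂ q * pd j u₂ q + u₃ q * pd j u₃ q)) := fun q j => by
    simpa only [sl_apply] using
      pd_eq_of_D (c_E (Dρ q j) (DU1 q j) (DU2 q j) (DU3 q j) (DTe q j))
  have ptQ4 : ∀ q : Pt,
      pt (fun y => ρ y * (cv * T y + (u₁ y ^ 2 + u₂ y ^ 2 + u₃ y ^ 2) / 2)) q
        = pt ρ q * (cv * T q + (u₁ q ^ 2 + u₂ q ^ 2 + u₃ q ^ 2) / 2)
          + ρ q * (cv * pt T q
            + (u₁ q * pt u₁ q + u₂ q * pt u₂ q + u₃ q * pt u₃ q)) := fun q => by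
    simpa only [tl_apply] using
      pt_eq_of_D (c_E (Dtρ q) (DtU1 q) (DtU2 q) (DtU3 q) (DtT q))
  -- momentum flux components
  have pdM11p : ∀ (q : Pt) (j : Fin 3),
      pd j (fun y => ρ y * u₁ y * u₁ y + ρ y * R * T y) q
        = (pd j ρ q * u₁ q + ρ q * pd j u₁ q) * u₁ q + ρ q * u₁ q * pd j u₁ q
          + (pd j ρ q * R * T q + ρ q * R * pd j T q) := fun q j => by
    simpa only [sl_apply] using
      pd_eq_of_D (c_P2p (Dρ q j) (DU1 q j) (DU1 q j) (DTe q j))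
  have pdM22p : ∀ (q : Pt) (j : Fin 3),
      pd j (fun y => ρ y * u₂ y * u₂ y + ρ y * R * T y) q
        = (pd j ρ q * u₂ q + ρ q * pd j u₂ q) * u₂ q + ρ q * u₂ q * pd j u₂ q
          + (pd j ρ q * R * T q + ρ q * R * pd j T q) := fun q j => by
    simpa only [sl_apply] using
      pd_eq_of_D (c_P2p (Dρ q j) (DU2 q j) (DU2 q j) (DTe q j))
  have pdM33p : ∀ (q : Pt) (j : Fin 3),
      pd j (fun y => ρ y * u₃ y * u₃ y + ρ y * R * T y) q
        = (pd j ρ q * u₃ q + ρ q * pd j u₃ q) * u₃ q + ρ q * u₃ q * pd j u₃ q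
          + (pd j ρ q * R * T q + ρ q * R * pd j T q) := fun q j => by
    simpa only [sl_apply] using
      pd_eq_of_D (c_P2p (Dρ q j) (DU3 q j) (DU3 q j) (DTe q j))
  have pdM21 : ∀ (q : Pt) (j : Fin 3),
      pd j (fun y => ρ y * u₂ y * u₁ y) q
        = (pd j ρ q * u₂ q + ρ q * pd j u₂ q) * u₁ q + ρ q * u₂ q * pd j u₁ q :=
    fun q j => by
      simpa only [sl_apply] using pd_eq_of_D (c_P2 (Dρ q j) (DU2 q j) (DU1 q j))
  have pdM31 : ∀ (q : Pt) (j : Fin 3),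
      pd j (fun y => ρ y * u₃ y * u₁ y) q
        = (pd j ρ q * u₃ q + ρ q * pd j u₃ q) * u₁ q + ρ q * u₃ q * pd j u₁ q :=
    fun q j => by
      simpa only [sl_apply] using pd_eq_of_D (c_P2 (Dρ q j) (DU3 q j) (DU1 q j))
  have pdM12 : ∀ (q : Pt) (j : Fin 3),
      pd j (fun y => ρ y * u₁ y * u₂ y) q
        = (pd j ρ q * u₁ q + ρ q * pd j u₁ q) * u₂ q + ρ q * u₁ q * pd j u₂ q :=
    fun q j => by
      simpa only [sl_apply] using pd_eq_of_D (c_P2 (Dρ q j) (DU1 q j) (DU2 q j))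
  have pdM32 : ∀ (q : Pt) (j : Fin 3),
      pd j (fun y => ρ y * u₃ y * u₂ y) q
        = (pd j ρ q * u₃ q + ρ q * pd j u₃ q) * u₂ q + ρ q * u₃ q * pd j u₂ q :=
    fun q j => by
      simpa only [sl_apply] using pd_eq_of_D (c_P2 (Dρ q j) (DU3 q j) (DU2 q j))
  have pdM13 : ∀ (q : Pt) (j : Fin 3),
      pd j (fun y => ρ y * u₁ y * u₃ y) q
        = (pd j ρ q * u₁ q + ρ q * pd j u₁ q) * u₃ q + ρ q * u₁ q * pd j u₃ q :=
    fun q j => by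
      simpa only [sl_apply] using pd_eq_of_D (c_P2 (Dρ q j) (DU1 q j) (DU3 q j))
  have pdM23 : ∀ (q : Pt) (j : Fin 3),
      pd j (fun y => ρ y * u₂ y * u₃ y) q
        = (pd j ρ q * u₂ q + ρ q * pd j u₂ q) * u₃ q + ρ q * u₂ q * pd j u₃ q :=
    fun q j => by
      simpa only [sl_apply] using pd_eq_of_D (c_P2 (Dρ q j) (DU2 q j) (DU3 q j))
  -- energy flux components
  have pdEf1 : ∀ (q : Pt) (j : Fin 3),
      pd j (fun y => u₁ y * (ρ y * (cv * T y + (u₁ y ^ 2 + u₂ y ^ 2 + u₃ y ^ 2) / 2)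
          + ρ y * R * T y)) q
        = pd j u₁ q * (ρ q * (cv * T q + (u₁ q ^ 2 + u₂ q ^ 2 + u₃ q ^ 2) / 2)
            + ρ q * R * T q)
          + u₁ q * (pd j ρ q * (cv * T q + (u₁ q ^ 2 + u₂ q ^ 2 + u₃ q ^ 2) / 2)
            + ρ q * (cv * pd j T q
              + (u₁ q * pd j u₁ q + u₂ q * pd j u₂ q + u₃ q * pd j u₃ q))
            + (pd j ρ q * R * T q + ρ q * R * pd j T q)) := fun q j => by
    simpa only [sl_apply] using
      pd_eq_of_D (c_Ef (Dρ q j) (DU1 q j) (DU2 q j) (DU3 q j) (DTe q j) (DU1 q j))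
  have pdEf2 : ∀ (q : Pt) (j : Fin 3),
      pd j (fun y => u₂ y * (ρ y * (cv * T y + (u₁ y ^ 2 + u₂ y ^ 2 + u₃ y ^ 2) / 2)
          + ρ y * R * T y)) q
        = pd j u₂ q * (ρ q * (cv * T q + (u₁ q ^ 2 + u₂ q ^ 2 + u₃ q ^ 2) / 2)
            + ρ q * R * T q)
          + u₂ q * (pd j ρ q * (cv * T q + (u₁ q ^ 2 + u₂ q ^ 2 + u₃ q ^ 2) / 2)
            + ρ q * (cv * pd j T q
              + (u₁ q * pd j u₁ q + u₂ q * pd j u₂ q + u₃ q * pd j u₃ q))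
            + (pd j ρ q * R * T q + ρ q * R * pd j T q)) := fun q j => by
    simpa only [sl_apply] using
      pd_eq_of_D (c_Ef (Dρ q j) (DU1 q j) (DU2 q j) (DU3 q j) (DTe q j) (DU2 q j))
  have pdEf3 : ∀ (q : Pt) (j : Fin 3),
      pd j (fun y => u₃ y * (ρ y * (cv * T y + (u₁ y ^ 2 + u₂ y ^ 2 + u₃ y ^ 2) / 2)
          + ρ y * R * T y)) q
        = pd j u₃ q * (ρ q * (cv * T q + (u₁ q ^ 2 + u₂ q ^ 2 + u₃ q ^ 2) / 2)
            + ρ q * R * T q)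
          + u₃ q * (pd j ρ q * (cv * T q + (u₁ q ^ 2 + u₂ q ^ 2 + u₃ q ^ 2) / 2)
            + ρ q * (cv * pd j T q
              + (u₁ q * pd j u₁ q + u₂ q * pd j u₂ q + u₃ q * pd j u₃ q))
            + (pd j ρ q * R * T q + ρ q * R * pd j T q)) := fun q j => by
    simpa only [sl_apply] using
      pd_eq_of_D (c_Ef (Dρ q j) (DU1 q j) (DU2 q j) (DU3 q j) (DTe q j) (DU3 q j))
  -- entropy flux components
  have pdF1 : ∀ (q : Pt) (j : Fin 3),
      pd j (fun y => -(ρ y * u₁ y * (cv * Real.log (T y) - R * Real.log (ρ y)))) q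
        = -((pd j ρ q * u₁ q + ρ q * pd j u₁ q)
              * (cv * Real.log (T q) - R * Real.log (ρ q))
            + cv * ρ q * u₁ q * pd j T q / T q - R * u₁ q * pd j ρ q) := fun q j => by
    simpa only [sl_apply] using
      pd_eq_of_D (c_F (Dρ q j) (DU1 q j) (DTe q j) (hrs q j) (hTs q j))
  have pdF2 : ∀ (q : Pt) (j : Fin 3),
      pd j (fun y => -(ρ y * u₂ y * (cv * Real.log (T y) - R * Real.log (ρ y)))) q
        = -((pd j ρ q * u₂ q + ρ q * pd j u₂ q)
              * (cv * Real.log (T q) - R * Real.log (ρ q))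
            + cv * ρ q * u₂ q * pd j T q / T q - R * u₂ q * pd j ρ q) := fun q j => by
    simpa only [sl_apply] using
      pd_eq_of_D (c_F (Dρ q j) (DU2 q j) (DTe q j) (hrs q j) (hTs q j))
  have pdF3 : ∀ (q : Pt) (j : Fin 3),
      pd j (fun y => -(ρ y * u₃ y * (cv * Real.log (T y) - R * Real.log (ρ y)))) q
        = -((pd j ρ q * u₃ q + ρ q * pd j u₃ q)
              * (cv * Real.log (T q) - R * Real.log (ρ q))
            + cv * ρ q * u₃ q * pd j T q / T q - R * u₃ q * pd j ρ q) := fun q j => by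
    simpa only [sl_apply] using
      pd_eq_of_D (c_F (Dρ q j) (DU3 q j) (DTe q j) (hrs q j) (hTs q j))
  -- entropy variable components
  have pdW0 : ∀ (q : Pt) (j : Fin 3),
      pd j (fun y => ((cv + R) * T y) / T y - (cv * Real.log (T y) - R * Real.log (ρ y))
          - (u₁ y ^ 2 + u₂ y ^ 2 + u₃ y ^ 2) / (2 * T y)) q
        = R * pd j ρ q / ρ q - cv * pd j T q / T q
          - (u₁ q * pd j u₁ q + u₂ q * pd j u₂ q + u₃ q * pd j u₃ q) / T q
          + (u₁ q ^ 2 + u₂ q ^ 2 + u₃ q ^ 2) * pd j T q / (2 * T q ^ 2) := fun q j => by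
    simpa only [sl_apply] using
      pd_eq_of_D (c_W0 (Dρ q j) (DU1 q j) (DU2 q j) (DU3 q j) (DTe q j) (hrs q j) (hTs q j))
  have pdW1 : ∀ (q : Pt) (j : Fin 3), pd j (fun y => u₁ y / T y) q
      = (pd j u₁ q * T q - u₁ q * pd j T q) / T q ^ 2 := fun q j => by
    simpa only [sl_apply] using pd_eq_of_D (c_Wi (DU1 q j) (DTe q j) (hTs q j))
  have pdW2 : ∀ (q : Pt) (j : Fin 3), pd j (fun y => u₂ y / T y) q
      = (pd j u₂ q * T q - u₂ q * pd j T q) / T q ^ 2 := fun q j => by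
    simpa only [sl_apply] using pd_eq_of_D (c_Wi (DU2 q j) (DTe q j) (hTs q j))
  have pdW3 : ∀ (q : Pt) (j : Fin 3), pd j (fun y => u₃ y / T y) q
      = (pd j u₃ q * T q - u₃ q * pd j T q) / T q ^ 2 := fun q j => by
    simpa only [sl_apply] using pd_eq_of_D (c_Wi (DU3 q j) (DTe q j) (hTs q j))
  have pdW4 : ∀ (q : Pt) (j : Fin 3), pd j (fun y => -(1 / T y)) q
      = pd j T q / T q ^ 2 := fun q j => by
    simpa only [sl_apply] using pd_eq_of_D (c_W4 (DTe q j) (hTs q j))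
  -- smoothness of the conservative fields
  have hQ1c : ContDiff ℝ 2 (fun y : Pt => ρ y * u₁ y) := hρreg.mul hu₁reg
  have hQ2c : ContDiff ℝ 2 (fun y : Pt => ρ y * u₂ y) := hρreg.mul hu₂reg
  have hQ3c : ContDiff ℝ 2 (fun y : Pt => ρ y * u₃ y) := hρreg.mul hu₃reg
  have hQ4c : ContDiff ℝ 2
      (fun y : Pt => ρ y * (cv * T y + (u₁ y ^ 2 + u₂ y ^ 2 + u₃ y ^ 2) / 2)) :=
    hρreg.mul ((contDiff_const.mul hTreg).add
      ((((hu₁reg.pow 2).add (hu₂reg.pow 2)).add (hu₃reg.pow 2)).div_const 2))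
  -- differentiability of the diffusive fluxes
  have hGdiff : ∀ (j : Fin 3) (Q : Pt → ℝ), ContDiff ℝ 2 Q →
      Differentiable ℝ (fun y => α * μ / ρ y * pd j Q y) := by
    intro j Q hQ
    have hνd : Differentiable ℝ (fun y : Pt => α * μ / ρ y) := by
      simp only [div_eq_mul_inv]
      exact fun q => ((hρd q).inv (hrne q)).const_mul (α * μ)
    exact hνd.mul ((contDiff_pd j hQ).differentiable one_ne_zero)
  have DG : ∀ (q : Pt) (j : Fin 3) (Q : Pt → ℝ), ContDiff ℝ 2 Q →
      D (sl q j) (q.1 j) (fun y => α * μ / ρ y * pd j Q y)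
        (pd j (fun y => α * μ / ρ y * pd j Q y) q) := fun q j Q hQ =>
    D_sl j (hGdiff j Q hQ q)
  -- pointwise identity: ν ∂ⱼS = Σₖ wₖ · (ν ∂ⱼqₖ)
  have hfun : ∀ j : Fin 3,
      (fun p' => α * μ / ρ p'
          * pd j (fun y => -(ρ y * (cv * Real.log (T y) - R * Real.log (ρ y)))) p')
      = (fun p' =>
          (((cv + R) * T p') / T p' - (cv * Real.log (T p') - R * Real.log (ρ p'))
              - (u₁ p' ^ 2 + u₂ p' ^ 2 + u₃ p' ^ 2) / (2 * T p'))
            * (α * μ / ρ p' * pd j ρ p')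
          + u₁ p' / T p' * (α * μ / ρ p' * pd j (fun y => ρ y * u₁ y) p')
          + u₂ p' / T p' * (α * μ / ρ p' * pd j (fun y => ρ y * u₂ y) p')
          + u₃ p' / T p' * (α * μ / ρ p' * pd j (fun y => ρ y * u₃ y) p')
          + (-(1 / T p')) * (α * μ / ρ p'
              * pd j (fun y => ρ y * (cv * T y + (u₁ y ^ 2 + u₂ y ^ 2 + u₃ y ^ 2) / 2)) p')) := by
    intro j
    funext q
    rw [pdS q j, pdRu1 q j, pdRu2 q j, pdRu3 q j, pdQ4 q j]
    linear_combination (-(α * μ / ρ q)) *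
      ALG1 (R := R) (cv := cv) (r := ρ q) (v1 := u₁ q) (v2 := u₂ q) (v3 := u₃ q)
        (T := T q) (dρ := pd j ρ q) (d1 := pd j u₁ q) (d2 := pd j u₂ q)
        (d3 := pd j u₃ q) (dT := pd j T q) (hrne q) (hTne q)
  intro p
-- product/chain rule for the diffusive entropy flux
  have hB : ∀ j : Fin 3,
      pd j (fun p' => α * μ / ρ p'
          * pd j (fun y => -(ρ y * (cv * Real.log (T y) - R * Real.log (ρ y)))) p') p
      = ((R * pd j ρ p / ρ p - cv * pd j T p / T p
            - (u₁ p * pd j u₁ p + u₂ p * pd j u₂ p + u₃ p * pd j u₃ p) / T p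
            + (u₁ p ^ 2 + u₂ p ^ 2 + u₃ p ^ 2) * pd j T p / (2 * T p ^ 2))
              * (α * μ / ρ p * pd j ρ p)
          + (((cv + R) * T p) / T p - (cv * Real.log (T p) - R * Real.log (ρ p))
              - (u₁ p ^ 2 + u₂ p ^ 2 + u₃ p ^ 2) / (2 * T p))
            * pd j (fun y => α * μ / ρ y * pd j ρ y) p)
        + ((pd j u₁ p * T p - u₁ p * pd j T p) / T p ^ 2
              * (α * μ / ρ p * pd j (fun y => ρ y * u₁ y) p)
          + u₁ p / T p * pd j (fun y => α * μ / ρ y * pd j (fun z => ρ z * u₁ z) y) p)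
        + ((pd j u₂ p * T p - u₂ p * pd j T p) / T p ^ 2
              * (α * μ / ρ p * pd j (fun y => ρ y * u₂ y) p)
          + u₂ p / T p * pd j (fun y => α * μ / ρ y * pd j (fun z => ρ z * u₂ z) y) p)
        + ((pd j u₃ p * T p - u₃ p * pd j T p) / T p ^ 2
              * (α * μ / ρ p * pd j (fun y => ρ y * u₃ y) p)
          + u₃ p / T p * pd j (fun y => α * μ / ρ y * pd j (fun z => ρ z * u₃ z) y) p)
        + (pd j T p / T p ^ 2
              * (α * μ / ρ p
                * pd j (fun y => ρ y * (cv * T y + (u₁ y ^ 2 + u₂ y ^ 2 + u₃ y ^ 2) / 2)) p)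
          + (-(1 / T p)) * pd j (fun y => α * μ / ρ y
              * pd j (fun z => ρ z * (cv * T z + (u₁ z ^ 2 + u₂ z ^ 2 + u₃ z ^ 2) / 2)) y) p) := by
    intro j
    rw [hfun j]
    have w0D := (c_W0 (R := R) (cv := cv) (Dρ p j) (DU1 p j) (DU2 p j) (DU3 p j) (DTe p j)
      (hrs p j) (hTs p j))
    have w1D := c_Wi (DU1 p j) (DTe p j) (hTs p j)
    have w2D := c_Wi (DU2 p j) (DTe p j) (hTs p j)
    have w3D := c_Wi (DU3 p j) (DTe p j) (hTs p j)
    have w4D := c_W4 (DTe p j) (hTs p j)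
    have d0 := DG p j ρ hρreg
    have d1 := DG p j (fun y => ρ y * u₁ y) hQ1c
    have d2 := DG p j (fun y => ρ y * u₂ y) hQ2c
    have d3 := DG p j (fun y => ρ y * u₃ y) hQ3c
    have d4 := DG p j (fun y => ρ y * (cv * T y + (u₁ y ^ 2 + u₂ y ^ 2 + u₃ y ^ 2) / 2)) hQ4c
    exact pd_eq_of_D (((((((w0D.mul d0).add (w1D.mul d1)).add (w2D.mul d2)).add
      (w3D.mul d3)).add (w4D.mul d4)).val_eq (by simp only [sl_apply])))
  -- gradient of the entropy-variable vector
  have hvec : ∀ j : Fin 3,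
      (fun k => pd j
          (fun p' => entropyVars R cv (ρ p') (u₁ p') (u₂ p') (u₃ p') (T p') k) p)
      = ![R * pd j ρ p / ρ p - cv * pd j T p / T p
            - (u₁ p * pd j u₁ p + u₂ p * pd j u₂ p + u₃ p * pd j u₃ p) / T p
            + (u₁ p ^ 2 + u₂ p ^ 2 + u₃ p ^ 2) * pd j T p / (2 * T p ^ 2),
          (pd j u₁ p * T p - u₁ p * pd j T p) / T p ^ 2,
          (pd j u₂ p * T p - u₂ p * pd j T p) / T p ^ 2,
          (pd j u₃ p * T p - u₃ p * pd j T p) / T p ^ 2,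
          pd j T p / T p ^ 2] := by
    intro j
    funext k
    fin_cases k
    · simpa only [Fin.reduceFinMk, entropyVars_0, Matrix.cons_val_zero] using pdW0 p j
    · simpa only [Fin.reduceFinMk, entropyVars_1, Matrix.cons_val_one, Matrix.head_cons, Matrix.cons_val_zero] using pdW1 p j
    · simpa only [Fin.reduceFinMk, entropyVars_2, Matrix.cons_val_two, Matrix.tail_cons,
        Matrix.head_cons] using pdW2 p j
    · simpa only [Fin.reduceFinMk, entropyVars_3, Matrix.cons_val_three, Matrix.tail_cons,
        Matrix.head_cons] using pdW3 p j
    · simpa only [Fin.reduceFinMk, entropyVars_4, Matrix.cons_val_four, Matrix.tail_cons,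
        Matrix.head_cons] using pdW4 p j
  have A3 : ∀ j : Fin 3,
      (![R * pd j ρ p / ρ p - cv * pd j T p / T p
            - (u₁ p * pd j u₁ p + u₂ p * pd j u₂ p + u₃ p * pd j u₃ p) / T p
            + (u₁ p ^ 2 + u₂ p ^ 2 + u₃ p ^ 2) * pd j T p / (2 * T p ^ 2),
          (pd j u₁ p * T p - u₁ p * pd j T p) / T p ^ 2,
          (pd j u₂ p * T p - u₂ p * pd j T p) / T p ^ 2,
          (pd j u₃ p * T p - u₃ p * pd j T p) / T p ^ 2,
          pd j T p / T p ^ 2] : Fin 5 → ℝ) ⬝ᵥ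
        (Mmat R (cv + R) (ρ p) (u₁ p) (u₂ p) (u₃ p) (T p) *ᵥ
          ![R * pd j ρ p / ρ p - cv * pd j T p / T p
            - (u₁ p * pd j u₁ p + u₂ p * pd j u₂ p + u₃ p * pd j u₃ p) / T p
            + (u₁ p ^ 2 + u₂ p ^ 2 + u₃ p ^ 2) * pd j T p / (2 * T p ^ 2),
          (pd j u₁ p * T p - u₁ p * pd j T p) / T p ^ 2,
          (pd j u₂ p * T p - u₂ p * pd j T p) / T p ^ 2,
          (pd j u₃ p * T p - u₃ p * pd j T p) / T p ^ 2,
          pd j T p / T p ^ 2])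
      = (R * pd j ρ p / ρ p - cv * pd j T p / T p
            - (u₁ p * pd j u₁ p + u₂ p * pd j u₂ p + u₃ p * pd j u₃ p) / T p
            + (u₁ p ^ 2 + u₂ p ^ 2 + u₃ p ^ 2) * pd j T p / (2 * T p ^ 2)) * pd j ρ p
        + (pd j u₁ p * T p - u₁ p * pd j T p) / T p ^ 2 * (pd j ρ p * u₁ p + ρ p * pd j u₁ p)
        + (pd j u₂ p * T p - u₂ p * pd j T p) / T p ^ 2 * (pd j ρ p * u₂ p + ρ p * pd j u₂ p)
        + (pd j u₃ p * T p - u₃ p * pd j T p) / T p ^ 2 * (pd j ρ p * u₃ p + ρ p * pd j u₃ p)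
        + pd j T p / T p ^ 2 * (pd j ρ p * (cv * T p + (u₁ p ^ 2 + u₂ p ^ 2 + u₃ p ^ 2) / 2)
            + ρ p * (cv * pd j T p
              + (u₁ p * pd j u₁ p + u₂ p * pd j u₂ p + u₃ p * pd j u₃ p))) := fun j =>
    ALG3 (R := R) (cv := cv) (r := ρ p) (v1 := u₁ p) (v2 := u₂ p) (v3 := u₃ p)
      (T := T p) (dρ := pd j ρ p) (d1 := pd j u₁ p) (d2 := pd j u₂ p)
      (d3 := pd j u₃ p) (dT := pd j T p) (ne_of_gt hR) (hrne p) (hTne p)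
  have hC : (0:ℝ) ≤ ∑ j : Fin 3, α * μ / ρ p *
      ((fun k => pd j
          (fun p' => entropyVars R cv (ρ p') (u₁ p') (u₂ p') (u₃ p') (T p') k) p) ⬝ᵥ
        (Mmat R (cv + R) (ρ p) (u₁ p) (u₂ p) (u₃ p) (T p) *ᵥ
          fun k => pd j
            (fun p' => entropyVars R cv (ρ p') (u₁ p') (u₂ p') (u₃ p') (T p') k) p)) :=
    Finset.sum_nonneg fun j _ => mul_nonneg
      (div_nonneg (mul_pos hα hμ).le (hρpos p).le)
      (ALG4 hR hcv (hρpos p) (hTpos p) _)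
  refine (fun key => ⟨key, key.trans_le (sub_le_self _ hC)⟩) ?_
  simp only [Fin.sum_univ_three, Matrix.cons_val_zero, Matrix.cons_val_one,
    Matrix.head_cons, Matrix.cons_val_two, Matrix.tail_cons]
  rw [hvec 0, hvec 1, hvec 2, A3 0, A3 1, A3 2, hB 0, hB 1, hB 2, ptS p,
    pdF1 p 0, pdF2 p 1, pdF3 p 2, pdRu1 p 0, pdRu1 p 1, pdRu1 p 2, pdRu2 p 0,
    pdRu2 p 1, pdRu2 p 2, pdRu3 p 0, pdRu3 p 1, pdRu3 p 2, pdQ4 p 0, pdQ4 p 1, pdQ4 p 2]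
  have H0 := hpde 0 p
  have H1 := hpde 1 p
  have H2 := hpde 2 p
  have H3 := hpde 3 p
  have H4 := hpde 4 p
  simp only [Fin.sum_univ_three, consVars_0, consVars_1, consVars_2, consVars_3,
    consVars_4, invFlux_00, invFlux_01, invFlux_02, invFlux_03, invFlux_04,
    invFlux_10, invFlux_11, invFlux_12, invFlux_13, invFlux_14, invFlux_20,
    invFlux_21, invFlux_22, invFlux_23, invFlux_24] at H0 H1 H2 H3 H4
  rw [pdRu1 p 0, pdRu2 p 1, pdRu3 p 2] at H0
  rw [ptRu1 p, pdM11p p 0, pdM21 p 1, pdM31 p 2] at H1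
  rw [ptRu2 p, pdM12 p 0, pdM22p p 1, pdM32 p 2] at H2
  rw [ptRu3 p, pdM13 p 0, pdM23 p 1, pdM33p p 2] at H3
  rw [ptQ4 p, pdEf1 p 0, pdEf2 p 1, pdEf3 p 2] at H4
  linear_combination
    (((cv + R) * T p) / T p - (cv * Real.log (T p) - R * Real.log (ρ p))
      - (u₁ p ^ 2 + u₂ p ^ 2 + u₃ p ^ 2) / (2 * T p)) * H0
    + u₁ p / T p * H1 + u₂ p / T p * H2 + u₃ p / T p * H3 + (-(1 / T p)) * H4
    - ALG1 (R := R) (cv := cv) (r := ρ p) (v1 := u₁ p) (v2 := u₂ p) (v3 := u₃ p)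
        (T := T p) (dρ := pt ρ p) (d1 := pt u₁ p) (d2 := pt u₂ p)
        (d3 := pt u₃ p) (dT := pt T p) (hrne p) (hTne p)
    - ALG2 (R := R) (cv := cv) (r := ρ p) (v1 := u₁ p) (v2 := u₂ p) (v3 := u₃ p)
        (T := T p) (dρ := pd 0 ρ p) (d1 := pd 0 u₁ p) (d2 := pd 0 u₂ p)
        (d3 := pd 0 u₃ p) (dT := pd 0 T p) (a := u₁ p) (da := pd 0 u₁ p)
        (p1 := 1) (p2 := 0) (p3 := 0) (hrne p) (hTne p)
    - ALG2 (R := R) (cv := cv) (r := ρ p) (v1 := u₁ p) (v2 := u₂ p) (v3 := u₃ p)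
        (T := T p) (dρ := pd 1 ρ p) (d1 := pd 1 u₁ p) (d2 := pd 1 u₂ p)
        (d3 := pd 1 u₃ p) (dT := pd 1 T p) (a := u₂ p) (da := pd 1 u₂ p)
        (p1 := 0) (p2 := 1) (p3 := 0) (hrne p) (hTne p)
    - ALG2 (R := R) (cv := cv) (r := ρ p) (v1 := u₁ p) (v2 := u₂ p) (v3 := u₃ p)
        (T := T p) (dρ := pd 2 ρ p) (d1 := pd 2 u₁ p) (d2 := pd 2 u₂ p)
        (d3 := pd 2 u₃ p) (dT := pd 2 T p) (a := u₃ p) (da := pd 2 u₃ p)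
        (p1 := 0) (p2 := 0) (p3 := 1) (hrne p) (hTne p)
end
end

section
/- Let Ω = (0,1)³ and let ρ, u₁, u₂, u₃, T be twice continuously differentiable on a neighborhood of the closure of Ω × [0, t₁], with ρ > 0 and T > 0, solving the Eulerian model ∂q/∂t + Σ_{j=1}^{3} ∂f_j/∂x_j = Σ_{j=1}^{3} ∂/∂x_j (ν ∂q/∂x_j) with ν = αμ/ρ, α > 0, μ > 0 constants. Then for every time t the time derivative of the total entropy is bounded by the boundary integral: d/dt ∫_Ω S dx ≤ Σ_{j=1}^{3} [ ∫_{x_j=1} (ν wᵀ ∂q/∂x_j − F_j) dσ − ∫_{x_j=0} (ν wᵀ ∂q/∂x_j − F_j) dσ ], where the face integrals are taken over the corresponding faces of the unit cube. -/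
open Matrix

noncomputable section

open MeasureTheory

/-- Boundary integrand in direction `x_j`: `ν wᵀ ∂q/∂x_j - F_j`, with
`ν = αμ/ρ`, entropy variables `w`, conservative variables `q` and entropy flux
`F_j = -ρ u_j s`. -/
def bdryIntegrand (R cv α μ : ℝ) (ρ u₁ u₂ u₃ T : (Fin 3 → ℝ) × ℝ → ℝ)
    (j : Fin 3) (p : (Fin 3 → ℝ) × ℝ) : ℝ :=
  (∑ k : Fin 5, (α * μ / ρ p) * entropyVars R cv (ρ p) (u₁ p) (u₂ p) (u₃ p) (T p) k *
      pd j (fun p' => consVars cv (ρ p') (u₁ p') (u₂ p') (u₃ p') (T p') k) p)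
    - (-(ρ p * ![u₁ p, u₂ p, u₃ p] j * (cv * Real.log (T p) - R * Real.log (ρ p))))

namespace EE

abbrev P3 := (Fin 3 → ℝ) × ℝ

def Ej (j : Fin 3) : P3 := (Pi.single j 1, 0)

def Et : P3 := (0, 1)

lemma path_eq (x : Fin 3 → ℝ) (t : ℝ) (j : Fin 3) :
    (fun s => (((Function.update x j s : Fin 3 → ℝ), t) : P3)) =
      fun s => ((x - x j • (Pi.single j (1:ℝ) : Fin 3 → ℝ), t) : P3) + s • Ej j := by
  funext s
  refine Prod.ext ?_ (by simp [Ej])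
  funext k
  rcases eq_or_ne k j with rfl | hk
  · simp [Ej]
  · simp [Ej, Function.update_of_ne hk, Pi.single_eq_of_ne hk]

lemma hasDerivAt_path (x : Fin 3 → ℝ) (t : ℝ) (j : Fin 3) (s : ℝ) :
    HasDerivAt (fun s => (((Function.update x j s : Fin 3 → ℝ), t) : P3)) (Ej j) s := by
  rw [path_eq]
  simpa using ((hasDerivAt_id s).smul_const (Ej j)).const_add ((x - x j • (Pi.single j (1:ℝ) : Fin 3 → ℝ), t) : P3)

lemma tpath_eq (x : Fin 3 → ℝ) :
    (fun τ => ((x, τ) : P3)) = fun τ => ((x, 0) : P3) + τ • Et := by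
  funext τ; refine Prod.ext (by simp [Et]) (by simp [Et])

lemma hasDerivAt_tpath (x : Fin 3 → ℝ) (τ : ℝ) :
    HasDerivAt (fun τ => ((x, τ) : P3)) Et τ := by
  rw [tpath_eq]
  simpa using ((hasDerivAt_id τ).smul_const Et).const_add ((x, 0) : P3)

lemma update_self' (p : P3) (j : Fin 3) :
    ((Function.update p.1 j (p.1 j) : Fin 3 → ℝ), p.2) = p := by
  rw [Function.update_eq_self]

/-- Compose a `HasFDerivAt` with the coordinate path to compute `pd`. -/
lemma pd_eq_of_hasFDerivAt {f : P3 → ℝ} {L : P3 →L[ℝ] ℝ} {p : P3} (j : Fin 3)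
    (hf : HasFDerivAt f L p) : pd j f p = L (Ej j) := by
  have h0 := update_self' p j
  have := (h0 ▸ hf).comp_hasDerivAt (p.1 j) (hasDerivAt_path p.1 p.2 j (p.1 j))
  exact this.deriv

lemma pt_eq_of_hasFDerivAt {f : P3 → ℝ} {L : P3 →L[ℝ] ℝ} {p : P3}
    (hf : HasFDerivAt f L p) : pt f p = L Et := by
  have := hf.comp_hasDerivAt p.2 (hasDerivAt_tpath p.1 p.2)
  exact this.deriv

lemma pd_congr_nhds {f g : P3 → ℝ} {p : P3} (j : Fin 3) (h : f =ᶠ[nhds p] g) :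
    pd j f p = pd j g p := by
  unfold pd
  apply Filter.EventuallyEq.deriv_eq
  have hc : Filter.Tendsto (fun s => (((Function.update p.1 j s : Fin 3 → ℝ), p.2) : P3))
      (nhds (p.1 j)) (nhds p) := by
    have := (hasDerivAt_path p.1 p.2 j (p.1 j)).continuousAt.tendsto
    rwa [update_self' p j] at this
  exact h.comp_tendsto hc

end EE

namespace EE

/-- Derivative of conservative variables along a path, in terms of primitive values
and their derivatives. -/
def Qd (cv r u₁ u₂ u₃ t dr du₁ du₂ du₃ dt : ℝ) : Fin 5 → ℝ :=
  ![dr, dr * u₁ + r * du₁, dr * u₂ + r * du₂, dr * u₃ + r * du₃,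
    dr * (cv * t + (u₁ ^ 2 + u₂ ^ 2 + u₃ ^ 2) / 2)
      + r * (cv * dt + (u₁ * du₁ + u₂ * du₂ + u₃ * du₃))]

/-- Derivative of entropy variables along a path. -/
def Wd (R cv r u₁ u₂ u₃ t dr du₁ du₂ du₃ dt : ℝ) : Fin 5 → ℝ :=
  ![-(cv * dt / t - R * dr / r)
      - ((u₁ * du₁ + u₂ * du₂ + u₃ * du₃) / t - (u₁ ^ 2 + u₂ ^ 2 + u₃ ^ 2) * dt / (2 * t ^ 2)),
    du₁ / t - u₁ * dt / t ^ 2, du₂ / t - u₂ * dt / t ^ 2, du₃ / t - u₃ * dt / t ^ 2,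
    dt / t ^ 2]

/-- Derivative of the mathematical entropy `S = -ρ s` along a path. -/
def Sd (R cv r t dr dt : ℝ) : ℝ :=
  -(dr * (cv * Real.log t - R * Real.log r) + r * (cv * dt / t - R * dr / r))

/-- Derivative of the entropy flux `F_j = -ρ u_j s` along a path. -/
def Fd (R cv r uj t dr duj dt : ℝ) : ℝ :=
  -((dr * uj + r * duj) * (cv * Real.log t - R * Real.log r)
      + r * uj * (cv * dt / t - R * dr / r))

/-- Derivative of the inviscid flux along a path. -/
def FLd (R cv : ℝ) (j : Fin 3) (r u₁ u₂ u₃ t dr du₁ du₂ du₃ dt : ℝ) : Fin 5 → ℝ :=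
  let uj := ![u₁, u₂, u₃] j
  let duj := ![du₁, du₂, du₃] j
  let E := cv * t + (u₁ ^ 2 + u₂ ^ 2 + u₃ ^ 2) / 2
  let dE := cv * dt + (u₁ * du₁ + u₂ * du₂ + u₃ * du₃)
  let dP := (dr * t + r * dt) * R
  ![dr * uj + r * duj,
    (dr * uj + r * duj) * u₁ + r * uj * du₁ + (if j = 0 then dP else 0),
    (dr * uj + r * duj) * u₂ + r * uj * du₂ + (if j = 1 then dP else 0),
    (dr * uj + r * duj) * u₃ + r * uj * du₃ + (if j = 2 then dP else 0),
    duj * (r * E + r * R * t) + uj * (dr * E + r * dE + (dr * t + r * dt) * R)]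

section paths

variable {R cv : ℝ} {r u₁ u₂ u₃ t : ℝ → ℝ} {dr du₁ du₂ du₃ dt : ℝ} {s₀ : ℝ}

lemma hasDerivAt_q (hr : HasDerivAt r dr s₀) (h1 : HasDerivAt u₁ du₁ s₀)
    (h2 : HasDerivAt u₂ du₂ s₀) (h3 : HasDerivAt u₃ du₃ s₀) (ht : HasDerivAt t dt s₀)
    (k : Fin 5) :
    HasDerivAt (fun s => consVars cv (r s) (u₁ s) (u₂ s) (u₃ s) (t s) k)
      (Qd cv (r s₀) (u₁ s₀) (u₂ s₀) (u₃ s₀) (t s₀) dr du₁ du₂ du₃ dt k) s₀ := by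
  fin_cases k
  · simpa [consVars, Qd] using hr
  · simp [consVars, Qd]; exact hr.mul h1
  · simp [consVars, Qd]; exact hr.mul h2
  · simp [consVars, Qd]; exact hr.mul h3
  · have hE : HasDerivAt (fun s => cv * t s + (u₁ s ^ 2 + u₂ s ^ 2 + u₃ s ^ 2) / 2)
        (cv * dt + (u₁ s₀ * du₁ + u₂ s₀ * du₂ + u₃ s₀ * du₃)) s₀ := by
      have := (ht.const_mul cv).add
        ((((h1.pow 2).add (h2.pow 2)).add (h3.pow 2)).div_const 2)
      exact this.congr_deriv (by ring)
    simp [consVars, Qd]; exact hr.mul hE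

lemma hasDerivAt_w (hr : HasDerivAt r dr s₀) (h1 : HasDerivAt u₁ du₁ s₀)
    (h2 : HasDerivAt u₂ du₂ s₀) (h3 : HasDerivAt u₃ du₃ s₀) (ht : HasDerivAt t dt s₀)
    (hr0 : r s₀ ≠ 0) (ht0 : t s₀ ≠ 0) (k : Fin 5) :
    HasDerivAt (fun s => entropyVars R cv (r s) (u₁ s) (u₂ s) (u₃ s) (t s) k)
      (Wd R cv (r s₀) (u₁ s₀) (u₂ s₀) (u₃ s₀) (t s₀) dr du₁ du₂ du₃ dt k) s₀ := by
  fin_cases k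
  · have hh : HasDerivAt
        (fun s => ((cv + R) * t s) / t s - (cv * Real.log (t s) - R * Real.log (r s))
          - (u₁ s ^ 2 + u₂ s ^ 2 + u₃ s ^ 2) / (2 * t s))
        ((((cv + R) * dt * t s₀ - (cv + R) * t s₀ * dt) / t s₀ ^ 2)
          - (cv * (dt / t s₀) - R * (dr / r s₀))
          - (((2 * u₁ s₀ ^ 1 * du₁ + 2 * u₂ s₀ ^ 1 * du₂ + 2 * u₃ s₀ ^ 1 * du₃) * (2 * t s₀)
              - (u₁ s₀ ^ 2 + u₂ s₀ ^ 2 + u₃ s₀ ^ 2) * (2 * dt)) / (2 * t s₀) ^ 2)) s₀ := by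
      exact (((ht.const_mul (cv + R)).div ht ht0).sub
          (((ht.log ht0).const_mul cv).sub ((hr.log hr0).const_mul R))).sub
        ((((h1.pow 2).add (h2.pow 2)).add (h3.pow 2)).div (ht.const_mul 2)
          (by simpa using ht0))
    refine hh.congr_deriv ?_
    simp [Wd]
    field_simp
    ring
  · simp [entropyVars, Wd]
    exact (h1.div ht ht0).congr_deriv (by field_simp)
  · simp [entropyVars, Wd]
    exact (h2.div ht ht0).congr_deriv (by field_simp)
  · simp [entropyVars, Wd]
    exact (h3.div ht ht0).congr_deriv (by field_simp)
  · refine (((hasDerivAt_const s₀ (1:ℝ)).div ht ht0).neg).congr_deriv ?_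
    simp [Wd]
    ring
end paths

section paths2

variable {R cv : ℝ} {r u₁ u₂ u₃ t : ℝ → ℝ} {dr du₁ du₂ du₃ dt : ℝ} {s₀ : ℝ}

lemma hasDerivAt_S (hr : HasDerivAt r dr s₀) (ht : HasDerivAt t dt s₀)
    (hr0 : r s₀ ≠ 0) (ht0 : t s₀ ≠ 0) :
    HasDerivAt (fun s => -(r s * (cv * Real.log (t s) - R * Real.log (r s))))
      (Sd R cv (r s₀) (t s₀) dr dt) s₀ := by
  have := (hr.mul (((ht.log ht0).const_mul cv).sub ((hr.log hr0).const_mul R))).neg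
  refine this.congr_deriv ?_
  unfold Sd
  simp only [Pi.sub_apply, Pi.mul_apply]
  field_simp
  try ring

lemma hasDerivAt_F {uj : ℝ → ℝ} {duj : ℝ} (hr : HasDerivAt r dr s₀)
    (hu : HasDerivAt uj duj s₀) (ht : HasDerivAt t dt s₀)
    (hr0 : r s₀ ≠ 0) (ht0 : t s₀ ≠ 0) :
    HasDerivAt (fun s => -(r s * uj s * (cv * Real.log (t s) - R * Real.log (r s))))
      (Fd R cv (r s₀) (uj s₀) (t s₀) dr duj dt) s₀ := by
  have := ((hr.mul hu).mul
    (((ht.log ht0).const_mul cv).sub ((hr.log hr0).const_mul R))).neg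
  refine this.congr_deriv ?_
  unfold Fd
  simp only [Pi.sub_apply, Pi.mul_apply]
  field_simp
  try ring

lemma hasDerivAt_f (hr : HasDerivAt r dr s₀) (h1 : HasDerivAt u₁ du₁ s₀)
    (h2 : HasDerivAt u₂ du₂ s₀) (h3 : HasDerivAt u₃ du₃ s₀) (ht : HasDerivAt t dt s₀)
    (j : Fin 3) (k : Fin 5) :
    HasDerivAt (fun s => invFlux R cv j (r s) (u₁ s) (u₂ s) (u₃ s) (t s) k)
      (FLd R cv j (r s₀) (u₁ s₀) (u₂ s₀) (u₃ s₀) (t s₀) dr du₁ du₂ du₃ dt k) s₀ := by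
  have hE : HasDerivAt (fun s => cv * t s + (u₁ s ^ 2 + u₂ s ^ 2 + u₃ s ^ 2) / 2)
      (cv * dt + (u₁ s₀ * du₁ + u₂ s₀ * du₂ + u₃ s₀ * du₃)) s₀ := by
    have := (ht.const_mul cv).add
      ((((h1.pow 2).add (h2.pow 2)).add (h3.pow 2)).div_const 2)
    exact this.congr_deriv (by ring)
  have hP : HasDerivAt (fun s => r s * R * t s) ((dr * t s₀ + r s₀ * dt) * R) s₀ := by
    have := (hr.mul_const R).mul ht
    exact this.congr_deriv (by ring)
  fin_cases j <;> fin_cases k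
  · simp [invFlux, FLd]; exact hr.mul h1
  · simp [invFlux, FLd]; exact ((hr.mul h1).mul h1).add hP
  · simp [invFlux, FLd]; exact (hr.mul h1).mul h2
  · simp [invFlux, FLd]; exact (hr.mul h1).mul h3
  · simp [invFlux, FLd]; exact h1.mul ((hr.mul hE).add hP)
  · simp [invFlux, FLd]; exact hr.mul h2
  · simp [invFlux, FLd]; exact (hr.mul h2).mul h1
  · simp [invFlux, FLd]; exact ((hr.mul h2).mul h2).add hP
  · simp [invFlux, FLd]; exact (hr.mul h2).mul h3
  · simp [invFlux, FLd]; exact h2.mul ((hr.mul hE).add hP)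
  · simp [invFlux, FLd]; exact hr.mul h3
  · simp [invFlux, FLd]; exact (hr.mul h3).mul h1
  · simp [invFlux, FLd]; exact (hr.mul h3).mul h2
  · simp [invFlux, FLd]; exact ((hr.mul h3).mul h3).add hP
  · simp [invFlux, FLd]; exact h3.mul ((hr.mul hE).add hP)

end paths2

section algebra

variable (R cv r u₁ u₂ u₃ t dr du₁ du₂ du₃ dt : ℝ)

/-- `w · dq = dS`. -/
lemma alg1 (hr0 : r ≠ 0) (ht0 : t ≠ 0) :
    ∑ k : Fin 5, entropyVars R cv r u₁ u₂ u₃ t k * Qd cv r u₁ u₂ u₃ t dr du₁ du₂ du₃ dt k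
      = Sd R cv r t dr dt := by
  simp only [Fin.sum_univ_five, entropyVars, Qd, Sd, Matrix.cons_val_zero, Matrix.cons_val_one,
    Matrix.head_cons, Matrix.cons_val_two, Matrix.tail_cons, Matrix.cons_val_three,
    Matrix.cons_val_four]
  field_simp
  ring

/-- `w · df_j = dF_j`. -/
lemma alg2 (j : Fin 3) (hr0 : r ≠ 0) (ht0 : t ≠ 0) :
    ∑ k : Fin 5, entropyVars R cv r u₁ u₂ u₃ t k
        * FLd R cv j r u₁ u₂ u₃ t dr du₁ du₂ du₃ dt k
      = Fd R cv r (![u₁, u₂, u₃] j) t dr (![du₁, du₂, du₃] j) dt := by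
  fin_cases j <;>
  · simp [Fin.sum_univ_five, entropyVars, FLd, Fd]
    field_simp
    ring

/-- `dw · dq` is the nonnegative dissipation quadratic form. -/
lemma alg4 (hr0 : r ≠ 0) (ht0 : t ≠ 0) :
    ∑ k : Fin 5, Wd R cv r u₁ u₂ u₃ t dr du₁ du₂ du₃ dt k
        * Qd cv r u₁ u₂ u₃ t dr du₁ du₂ du₃ dt k
      = R * dr ^ 2 / r + r * (du₁ ^ 2 + du₂ ^ 2 + du₃ ^ 2) / t + r * cv * dt ^ 2 / t ^ 2 := by
  simp only [Fin.sum_univ_five, Wd, Qd, Matrix.cons_val_zero, Matrix.cons_val_one,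
    Matrix.head_cons, Matrix.cons_val_two, Matrix.tail_cons, Matrix.cons_val_three,
    Matrix.cons_val_four]
  field_simp
  ring

end algebra
end EE

namespace EE

/-- Directional derivative field in spatial direction `j`. -/
def Dj (φ : P3 → ℝ) (j : Fin 3) (p : P3) : ℝ := fderiv ℝ φ p (Ej j)

def Dt' (φ : P3 → ℝ) (p : P3) : ℝ := fderiv ℝ φ p Et

lemma hasDerivAt_field_path {φ : P3 → ℝ} {p : P3} (hφ : DifferentiableAt ℝ φ p) (j : Fin 3) :
    HasDerivAt (fun s => φ (Function.update p.1 j s, p.2)) (Dj φ j p) (p.1 j) := by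
  have h0 := update_self' p j
  have hf : HasFDerivAt φ (fderiv ℝ φ p)
      (((Function.update p.1 j (p.1 j) : Fin 3 → ℝ), p.2) : P3) := by
    rw [h0]; exact hφ.hasFDerivAt
  exact hf.comp_hasDerivAt (p.1 j) (hasDerivAt_path p.1 p.2 j (p.1 j))

lemma hasDerivAt_field_tpath {φ : P3 → ℝ} {p : P3} (hφ : DifferentiableAt ℝ φ p) :
    HasDerivAt (fun τ => φ (p.1, τ)) (Dt' φ p) p.2 := by
  exact hφ.hasFDerivAt.comp_hasDerivAt p.2 (hasDerivAt_tpath p.1 p.2)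

lemma diffAt_of_contDiffOn {φ : P3 → ℝ} {U : Set P3} {p : P3} (hU : IsOpen U)
    (hφ : ContDiffOn ℝ 2 φ U) (hp : p ∈ U) : DifferentiableAt ℝ φ p :=
  (hφ.differentiableOn (by norm_num)).differentiableAt (hU.mem_nhds hp)

lemma contDiffOn_Dj {φ : P3 → ℝ} {U : Set P3} (hU : IsOpen U)
    (hφ : ContDiffOn ℝ 2 φ U) (j : Fin 3) : ContDiffOn ℝ 1 (Dj φ j) U := by
  have h1 : ContDiffOn ℝ 1 (fderiv ℝ φ) U := hφ.fderiv_of_isOpen hU (by norm_num)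
  exact (ContinuousLinearMap.apply ℝ ℝ (Ej j)).contDiff.comp_contDiffOn h1

lemma diffAt_Dj {φ : P3 → ℝ} {U : Set P3} {p : P3} (hU : IsOpen U)
    (hφ : ContDiffOn ℝ 2 φ U) (hp : p ∈ U) (j : Fin 3) :
    DifferentiableAt ℝ (Dj φ j) p :=
  ((contDiffOn_Dj hU hφ j).differentiableOn one_ne_zero).differentiableAt (hU.mem_nhds hp)

/-- Explicit expression for the boundary integrand, with `pd` replaced by `Dj`. -/
def Gexpr (R cv α μ : ℝ) (ρ u₁ u₂ u₃ T : P3 → ℝ) (j : Fin 3) (p : P3) : ℝ :=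
  (∑ k : Fin 5, (α * μ / ρ p) * entropyVars R cv (ρ p) (u₁ p) (u₂ p) (u₃ p) (T p) k *
      Qd cv (ρ p) (u₁ p) (u₂ p) (u₃ p) (T p)
        (Dj ρ j p) (Dj u₁ j p) (Dj u₂ j p) (Dj u₃ j p) (Dj T j p) k)
    - (-(ρ p * ![u₁ p, u₂ p, u₃ p] j * (cv * Real.log (T p) - R * Real.log (ρ p))))

end EE

namespace EE

lemma hasDerivAt_vec3 {a b c : ℝ → ℝ} {da db dc : ℝ} {s₀ : ℝ} (ha : HasDerivAt a da s₀)
    (hb : HasDerivAt b db s₀) (hc : HasDerivAt c dc s₀) (j : Fin 3) :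
    HasDerivAt (fun s => ![a s, b s, c s] j) (![da, db, dc] j) s₀ := by
  fin_cases j <;> simpa using ‹_›

lemma differentiableAt_Qd {cv : ℝ} {r u₁ u₂ u₃ t a b c d e : ℝ → ℝ} {s₀ : ℝ}
    (hr : DifferentiableAt ℝ r s₀) (h1 : DifferentiableAt ℝ u₁ s₀)
    (h2 : DifferentiableAt ℝ u₂ s₀) (h3 : DifferentiableAt ℝ u₃ s₀)
    (ht : DifferentiableAt ℝ t s₀) (ha : DifferentiableAt ℝ a s₀)
    (hb : DifferentiableAt ℝ b s₀) (hc : DifferentiableAt ℝ c s₀)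
    (hd : DifferentiableAt ℝ d s₀) (he : DifferentiableAt ℝ e s₀) (k : Fin 5) :
    DifferentiableAt ℝ
      (fun s => Qd cv (r s) (u₁ s) (u₂ s) (u₃ s) (t s) (a s) (b s) (c s) (d s) (e s) k) s₀ := by
  fin_cases k <;>
  · simp [Qd]
    fun_prop

end EE

namespace EE

section ptwise

variable {R cv α μ : ℝ} {ρ u₁ u₂ u₃ T : P3 → ℝ} {U : Set P3}

lemma pd_consVars (hU : IsOpen U) (hρ : ContDiffOn ℝ 2 ρ U) (hu₁ : ContDiffOn ℝ 2 u₁ U)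
    (hu₂ : ContDiffOn ℝ 2 u₂ U) (hu₃ : ContDiffOn ℝ 2 u₃ U) (hT : ContDiffOn ℝ 2 T U)
    {p : P3} (hp : p ∈ U) (j : Fin 3) (k : Fin 5) :
    pd j (fun p' => consVars cv (ρ p') (u₁ p') (u₂ p') (u₃ p') (T p') k) p
      = Qd cv (ρ p) (u₁ p) (u₂ p) (u₃ p) (T p)
          (Dj ρ j p) (Dj u₁ j p) (Dj u₂ j p) (Dj u₃ j p) (Dj T j p) k := by
  have h := (hasDerivAt_q (cv := cv)
    (hasDerivAt_field_path (diffAt_of_contDiffOn hU hρ hp) j)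
    (hasDerivAt_field_path (diffAt_of_contDiffOn hU hu₁ hp) j)
    (hasDerivAt_field_path (diffAt_of_contDiffOn hU hu₂ hp) j)
    (hasDerivAt_field_path (diffAt_of_contDiffOn hU hu₃ hp) j)
    (hasDerivAt_field_path (diffAt_of_contDiffOn hU hT hp) j) k).deriv
  rw [update_self' p j] at h
  exact h

lemma bdry_eq_Gexpr (hU : IsOpen U) (hρ : ContDiffOn ℝ 2 ρ U) (hu₁ : ContDiffOn ℝ 2 u₁ U)
    (hu₂ : ContDiffOn ℝ 2 u₂ U) (hu₃ : ContDiffOn ℝ 2 u₃ U) (hT : ContDiffOn ℝ 2 T U)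
    (j : Fin 3) {p : P3} (hp : p ∈ U) :
    bdryIntegrand R cv α μ ρ u₁ u₂ u₃ T j p = Gexpr R cv α μ ρ u₁ u₂ u₃ T j p := by
  unfold bdryIntegrand Gexpr
  congr 1
  refine Finset.sum_congr rfl fun k _ => ?_
  rw [pd_consVars hU hρ hu₁ hu₂ hu₃ hT hp j k]

lemma contDiffOn_Gexpr (hU : IsOpen U) (hρ : ContDiffOn ℝ 2 ρ U) (hu₁ : ContDiffOn ℝ 2 u₁ U)
    (hu₂ : ContDiffOn ℝ 2 u₂ U) (hu₃ : ContDiffOn ℝ 2 u₃ U) (hT : ContDiffOn ℝ 2 T U)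
    (hpos : ∀ p ∈ U, 0 < ρ p ∧ 0 < T p) (j : Fin 3) :
    ContDiffOn ℝ 1 (Gexpr R cv α μ ρ u₁ u₂ u₃ T j) U := by
  have hρ0 : ∀ p ∈ U, ρ p ≠ 0 := fun p hp => (hpos p hp).1.ne'
  have hT0 : ∀ p ∈ U, T p ≠ 0 := fun p hp => (hpos p hp).2.ne'
  have h2T0 : ∀ p ∈ U, 2 * T p ≠ 0 := fun p hp => by
    have := (hpos p hp).2.ne'; positivity
  have h20 : ∀ p ∈ U, (2:ℝ) ≠ 0 := fun _ _ => two_ne_zero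
  have hρ1 : ContDiffOn ℝ 1 ρ U := hρ.of_le (by norm_num)
  have hu₁1 : ContDiffOn ℝ 1 u₁ U := hu₁.of_le (by norm_num)
  have hu₂1 : ContDiffOn ℝ 1 u₂ U := hu₂.of_le (by norm_num)
  have hu₃1 : ContDiffOn ℝ 1 u₃ U := hu₃.of_le (by norm_num)
  have hT1 : ContDiffOn ℝ 1 T U := hT.of_le (by norm_num)
  have hDρ : ContDiffOn ℝ 1 (Dj ρ j) U := contDiffOn_Dj hU hρ j
  have hDu₁ : ContDiffOn ℝ 1 (Dj u₁ j) U := contDiffOn_Dj hU hu₁ j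
  have hDu₂ : ContDiffOn ℝ 1 (Dj u₂ j) U := contDiffOn_Dj hU hu₂ j
  have hDu₃ : ContDiffOn ℝ 1 (Dj u₃ j) U := contDiffOn_Dj hU hu₃ j
  have hDT : ContDiffOn ℝ 1 (Dj T j) U := contDiffOn_Dj hU hT j
  unfold Gexpr
  fin_cases j <;>
  · simp [Fin.sum_univ_five, entropyVars, Qd]
    fun_prop (disch := assumption)

lemma contDiffOn_Sfun (hρ : ContDiffOn ℝ 2 ρ U) (hT : ContDiffOn ℝ 2 T U)
    (hpos : ∀ p ∈ U, 0 < ρ p ∧ 0 < T p) :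
    ContDiffOn ℝ 1 (fun p => -(ρ p * (cv * Real.log (T p) - R * Real.log (ρ p)))) U := by
  have hρ0 : ∀ p ∈ U, ρ p ≠ 0 := fun p hp => (hpos p hp).1.ne'
  have hT0 : ∀ p ∈ U, T p ≠ 0 := fun p hp => (hpos p hp).2.ne'
  have hρ1 : ContDiffOn ℝ 1 ρ U := hρ.of_le (by norm_num)
  have hT1 : ContDiffOn ℝ 1 T U := hT.of_le (by norm_num)
  fun_prop (disch := assumption)

end ptwise
end EE

namespace EE
section visc

variable {R cv α μ : ℝ} {ρ u₁ u₂ u₃ T : P3 → ℝ} {U : Set P3}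

lemma path_tendsto (p : P3) (j : Fin 3) :
    Filter.Tendsto (fun s => (((Function.update p.1 j s : Fin 3 → ℝ), p.2) : P3))
      (nhds (p.1 j)) (nhds p) := by
  have := (hasDerivAt_path p.1 p.2 j (p.1 j)).continuousAt.tendsto
  rwa [update_self' p j] at this

lemma visc_j (hU : IsOpen U) (hρ : ContDiffOn ℝ 2 ρ U) (hu₁ : ContDiffOn ℝ 2 u₁ U)
    (hu₂ : ContDiffOn ℝ 2 u₂ U) (hu₃ : ContDiffOn ℝ 2 u₃ U) (hT : ContDiffOn ℝ 2 T U)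
    (hpos : ∀ p ∈ U, 0 < ρ p ∧ 0 < T p) {p : P3} (hp : p ∈ U) (j : Fin 3) :
    ∑ k : Fin 5, entropyVars R cv (ρ p) (u₁ p) (u₂ p) (u₃ p) (T p) k
        * pd j (fun p' => (α * μ / ρ p') *
            pd j (fun p'' => consVars cv (ρ p'') (u₁ p'') (u₂ p'') (u₃ p'') (T p'') k) p') p
      = pd j (bdryIntegrand R cv α μ ρ u₁ u₂ u₃ T j) p
        + Fd R cv (ρ p) (![u₁ p, u₂ p, u₃ p] j) (T p) (Dj ρ j p)
            (![Dj u₁ j p, Dj u₂ j p, Dj u₃ j p] j) (Dj T j p)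
        - (α * μ / ρ p) * (R * Dj ρ j p ^ 2 / ρ p
            + ρ p * (Dj u₁ j p ^ 2 + Dj u₂ j p ^ 2 + Dj u₃ j p ^ 2) / T p
            + ρ p * cv * Dj T j p ^ 2 / T p ^ 2) := by
  obtain ⟨hρp, hTp⟩ := hpos p hp
  have e0 : (((Function.update p.1 j (p.1 j) : Fin 3 → ℝ), p.2) : P3) = p := update_self' p j
  -- field path derivatives
  have hρs := hasDerivAt_field_path (diffAt_of_contDiffOn hU hρ hp) j
  have hu₁s := hasDerivAt_field_path (diffAt_of_contDiffOn hU hu₁ hp) j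
  have hu₂s := hasDerivAt_field_path (diffAt_of_contDiffOn hU hu₂ hp) j
  have hu₃s := hasDerivAt_field_path (diffAt_of_contDiffOn hU hu₃ hp) j
  have hTs := hasDerivAt_field_path (diffAt_of_contDiffOn hU hT hp) j
  have hρ0' : ρ (((Function.update p.1 j (p.1 j) : Fin 3 → ℝ), p.2) : P3) ≠ 0 := by
    rw [e0]; exact hρp.ne'
  have hT0' : T (((Function.update p.1 j (p.1 j) : Fin 3 → ℝ), p.2) : P3) ≠ 0 := by
    rw [e0]; exact hTp.ne'
  -- derivative-field path derivatives
  have hDρs := hasDerivAt_field_path (diffAt_Dj hU hρ hp j) j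
  have hDu₁s := hasDerivAt_field_path (diffAt_Dj hU hu₁ hp j) j
  have hDu₂s := hasDerivAt_field_path (diffAt_Dj hU hu₂ hp j) j
  have hDu₃s := hasDerivAt_field_path (diffAt_Dj hU hu₃ hp j) j
  have hDTs := hasDerivAt_field_path (diffAt_Dj hU hT hp j) j
  -- entropy-variable path derivatives
  have hws := fun k => hasDerivAt_w (R := R) (cv := cv) hρs hu₁s hu₂s hu₃s hTs hρ0' hT0' k
  simp only [e0] at hws
  -- ν along path
  have hνγ := (hasDerivAt_const (p.1 j) (α * μ)).div hρs hρ0'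
  simp only [e0] at hνγ
  -- Qd expression along path
  have hQγ : ∀ k : Fin 5, HasDerivAt
      (fun s => Qd cv (ρ (Function.update p.1 j s, p.2)) (u₁ (Function.update p.1 j s, p.2))
        (u₂ (Function.update p.1 j s, p.2)) (u₃ (Function.update p.1 j s, p.2))
        (T (Function.update p.1 j s, p.2)) (Dj ρ j (Function.update p.1 j s, p.2))
        (Dj u₁ j (Function.update p.1 j s, p.2)) (Dj u₂ j (Function.update p.1 j s, p.2))
        (Dj u₃ j (Function.update p.1 j s, p.2)) (Dj T j (Function.update p.1 j s, p.2)) k)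
      (deriv (fun s => Qd cv (ρ (Function.update p.1 j s, p.2))
        (u₁ (Function.update p.1 j s, p.2)) (u₂ (Function.update p.1 j s, p.2))
        (u₃ (Function.update p.1 j s, p.2)) (T (Function.update p.1 j s, p.2))
        (Dj ρ j (Function.update p.1 j s, p.2)) (Dj u₁ j (Function.update p.1 j s, p.2))
        (Dj u₂ j (Function.update p.1 j s, p.2)) (Dj u₃ j (Function.update p.1 j s, p.2))
        (Dj T j (Function.update p.1 j s, p.2)) k) (p.1 j)) (p.1 j) := fun k =>
    (differentiableAt_Qd hρs.differentiableAt hu₁s.differentiableAt hu₂s.differentiableAt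
      hu₃s.differentiableAt hTs.differentiableAt hDρs.differentiableAt hDu₁s.differentiableAt
      hDu₂s.differentiableAt hDu₃s.differentiableAt hDTs.differentiableAt k).hasDerivAt
  -- eventual equality of the inner pd with the Qd expression, along the path
  have hcomp : ∀ k : Fin 5, ∀ᶠ s in nhds (p.1 j),
      pd j (fun p'' => consVars cv (ρ p'') (u₁ p'') (u₂ p'') (u₃ p'') (T p'') k)
          ((Function.update p.1 j s, p.2) : P3)
        = Qd cv (ρ (Function.update p.1 j s, p.2)) (u₁ (Function.update p.1 j s, p.2))
            (u₂ (Function.update p.1 j s, p.2)) (u₃ (Function.update p.1 j s, p.2))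
            (T (Function.update p.1 j s, p.2)) (Dj ρ j (Function.update p.1 j s, p.2))
            (Dj u₁ j (Function.update p.1 j s, p.2)) (Dj u₂ j (Function.update p.1 j s, p.2))
            (Dj u₃ j (Function.update p.1 j s, p.2)) (Dj T j (Function.update p.1 j s, p.2)) k :=
    fun k => (path_tendsto p j).eventually <| Filter.eventually_of_mem (hU.mem_nhds hp)
      (fun p' hp' => pd_consVars hU hρ hu₁ hu₂ hu₃ hT hp' j k)
  -- the H-terms: derivative of ν · (∂_j q_k)
  have hH : ∀ k : Fin 5, HasDerivAt
      (fun s => (fun p' => (α * μ / ρ p') *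
          pd j (fun p'' => consVars cv (ρ p'') (u₁ p'') (u₂ p'') (u₃ p'') (T p'') k) p')
        ((Function.update p.1 j s, p.2) : P3))
      ((0 * ρ p - α * μ * Dj ρ j p) / ρ p ^ 2
          * Qd cv (ρ p) (u₁ p) (u₂ p) (u₃ p) (T p) (Dj ρ j p) (Dj u₁ j p) (Dj u₂ j p)
              (Dj u₃ j p) (Dj T j p) k
        + (α * μ / ρ p) * deriv (fun s => Qd cv (ρ (Function.update p.1 j s, p.2))
            (u₁ (Function.update p.1 j s, p.2)) (u₂ (Function.update p.1 j s, p.2))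
            (u₃ (Function.update p.1 j s, p.2)) (T (Function.update p.1 j s, p.2))
            (Dj ρ j (Function.update p.1 j s, p.2)) (Dj u₁ j (Function.update p.1 j s, p.2))
            (Dj u₂ j (Function.update p.1 j s, p.2)) (Dj u₃ j (Function.update p.1 j s, p.2))
            (Dj T j (Function.update p.1 j s, p.2)) k) (p.1 j)) (p.1 j) := by
    intro k
    have h := hνγ.mul (hQγ k)
    simp only [Pi.mul_apply, Pi.div_apply, e0] at h
    exact h.congr_of_eventuallyEq <| (hcomp k).mono fun s hs => by simp only [Pi.mul_apply, Pi.div_apply, hs]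
  -- derivative of the viscous sum in the boundary integrand
  have hA : HasDerivAt
      (fun s => ∑ k : Fin 5, (α * μ / ρ ((Function.update p.1 j s, p.2) : P3)) *
          entropyVars R cv (ρ (Function.update p.1 j s, p.2)) (u₁ (Function.update p.1 j s, p.2))
            (u₂ (Function.update p.1 j s, p.2)) (u₃ (Function.update p.1 j s, p.2))
            (T (Function.update p.1 j s, p.2)) k *
          pd j (fun p'' => consVars cv (ρ p'') (u₁ p'') (u₂ p'') (u₃ p'') (T p'') k)
            ((Function.update p.1 j s, p.2) : P3))
      (∑ k : Fin 5,
        (((0 * ρ p - α * μ * Dj ρ j p) / ρ p ^ 2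
              * entropyVars R cv (ρ p) (u₁ p) (u₂ p) (u₃ p) (T p) k
            + (α * μ / ρ p) * Wd R cv (ρ p) (u₁ p) (u₂ p) (u₃ p) (T p) (Dj ρ j p) (Dj u₁ j p)
                (Dj u₂ j p) (Dj u₃ j p) (Dj T j p) k)
            * Qd cv (ρ p) (u₁ p) (u₂ p) (u₃ p) (T p) (Dj ρ j p) (Dj u₁ j p) (Dj u₂ j p)
                (Dj u₃ j p) (Dj T j p) k
          + (α * μ / ρ p) * entropyVars R cv (ρ p) (u₁ p) (u₂ p) (u₃ p) (T p) k
            * deriv (fun s => Qd cv (ρ (Function.update p.1 j s, p.2))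
                (u₁ (Function.update p.1 j s, p.2)) (u₂ (Function.update p.1 j s, p.2))
                (u₃ (Function.update p.1 j s, p.2)) (T (Function.update p.1 j s, p.2))
                (Dj ρ j (Function.update p.1 j s, p.2)) (Dj u₁ j (Function.update p.1 j s, p.2))
                (Dj u₂ j (Function.update p.1 j s, p.2)) (Dj u₃ j (Function.update p.1 j s, p.2))
                (Dj T j (Function.update p.1 j s, p.2)) k) (p.1 j))) (p.1 j) := by
    refine HasDerivAt.fun_sum fun k _ => ?_
    have h := (hνγ.mul (hws k)).mul (hQγ k)
    simp only [Pi.mul_apply, Pi.div_apply, e0] at h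
    exact h.congr_of_eventuallyEq <| (hcomp k).mono fun s hs => by simp only [Pi.mul_apply, Pi.div_apply, hs]
  -- derivative of the entropy-flux part
  have hFγ := hasDerivAt_F (R := R) (cv := cv) hρs (hasDerivAt_vec3 hu₁s hu₂s hu₃s j) hTs hρ0' hT0'
  simp only [e0] at hFγ
  -- derivative of the boundary integrand
  have hB := hA.sub hFγ
  have hpdB : pd j (bdryIntegrand R cv α μ ρ u₁ u₂ u₃ T j) p = _ := hB.deriv
  rw [hpdB]
  -- compute the sum of w_k times the H-derivatives
  have hsum : ∀ k : Fin 5,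
      entropyVars R cv (ρ p) (u₁ p) (u₂ p) (u₃ p) (T p) k
          * pd j (fun p' => (α * μ / ρ p') *
              pd j (fun p'' => consVars cv (ρ p'') (u₁ p'') (u₂ p'') (u₃ p'') (T p'') k) p') p
        = entropyVars R cv (ρ p) (u₁ p) (u₂ p) (u₃ p) (T p) k * _ :=
    fun k => congrArg _ (hH k).deriv
  calc ∑ k : Fin 5, entropyVars R cv (ρ p) (u₁ p) (u₂ p) (u₃ p) (T p) k
        * pd j (fun p' => (α * μ / ρ p') *
            pd j (fun p'' => consVars cv (ρ p'') (u₁ p'') (u₂ p'') (u₃ p'') (T p'') k) p') p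
      = ∑ k : Fin 5, entropyVars R cv (ρ p) (u₁ p) (u₂ p) (u₃ p) (T p) k *
          ((0 * ρ p - α * μ * Dj ρ j p) / ρ p ^ 2
              * Qd cv (ρ p) (u₁ p) (u₂ p) (u₃ p) (T p) (Dj ρ j p) (Dj u₁ j p) (Dj u₂ j p)
                  (Dj u₃ j p) (Dj T j p) k
            + (α * μ / ρ p) * deriv (fun s => Qd cv (ρ (Function.update p.1 j s, p.2))
                (u₁ (Function.update p.1 j s, p.2)) (u₂ (Function.update p.1 j s, p.2))
                (u₃ (Function.update p.1 j s, p.2)) (T (Function.update p.1 j s, p.2))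
                (Dj ρ j (Function.update p.1 j s, p.2)) (Dj u₁ j (Function.update p.1 j s, p.2))
                (Dj u₂ j (Function.update p.1 j s, p.2)) (Dj u₃ j (Function.update p.1 j s, p.2))
                (Dj T j (Function.update p.1 j s, p.2)) k) (p.1 j)) :=
        Finset.sum_congr rfl fun k _ => congrArg _ (hH k).deriv
    _ = _ := by
        rw [← alg4 R cv (ρ p) (u₁ p) (u₂ p) (u₃ p) (T p) (Dj ρ j p) (Dj u₁ j p) (Dj u₂ j p)
          (Dj u₃ j p) (Dj T j p) hρp.ne' hTp.ne']
        rw [add_sub_assoc, Finset.mul_sum, sub_add_sub_cancel, ← Finset.sum_sub_distrib]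
        refine Finset.sum_congr rfl fun k _ => ?_
        ring

end visc
end EE

namespace EE
section key

variable {R cv α μ : ℝ} {ρ u₁ u₂ u₃ T : P3 → ℝ} {U : Set P3}

lemma pt_consVars (hU : IsOpen U) (hρ : ContDiffOn ℝ 2 ρ U) (hu₁ : ContDiffOn ℝ 2 u₁ U)
    (hu₂ : ContDiffOn ℝ 2 u₂ U) (hu₃ : ContDiffOn ℝ 2 u₃ U) (hT : ContDiffOn ℝ 2 T U)
    {p : P3} (hp : p ∈ U) (k : Fin 5) :
    pt (fun p' => consVars cv (ρ p') (u₁ p') (u₂ p') (u₃ p') (T p') k) p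
      = Qd cv (ρ p) (u₁ p) (u₂ p) (u₃ p) (T p)
          (Dt' ρ p) (Dt' u₁ p) (Dt' u₂ p) (Dt' u₃ p) (Dt' T p) k := by
  have h := (hasDerivAt_q (cv := cv)
    (hasDerivAt_field_tpath (diffAt_of_contDiffOn hU hρ hp))
    (hasDerivAt_field_tpath (diffAt_of_contDiffOn hU hu₁ hp))
    (hasDerivAt_field_tpath (diffAt_of_contDiffOn hU hu₂ hp))
    (hasDerivAt_field_tpath (diffAt_of_contDiffOn hU hu₃ hp))
    (hasDerivAt_field_tpath (diffAt_of_contDiffOn hU hT hp)) k).deriv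
  unfold pt
  simpa only [Prod.mk.eta] using h

lemma pd_invFlux (hU : IsOpen U) (hρ : ContDiffOn ℝ 2 ρ U) (hu₁ : ContDiffOn ℝ 2 u₁ U)
    (hu₂ : ContDiffOn ℝ 2 u₂ U) (hu₃ : ContDiffOn ℝ 2 u₃ U) (hT : ContDiffOn ℝ 2 T U)
    {p : P3} (hp : p ∈ U) (j j' : Fin 3) (k : Fin 5) :
    pd j (fun p' => invFlux R cv j' (ρ p') (u₁ p') (u₂ p') (u₃ p') (T p') k) p
      = FLd R cv j' (ρ p) (u₁ p) (u₂ p) (u₃ p) (T p)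
          (Dj ρ j p) (Dj u₁ j p) (Dj u₂ j p) (Dj u₃ j p) (Dj T j p) k := by
  have h := (hasDerivAt_f (R := R) (cv := cv)
    (hasDerivAt_field_path (diffAt_of_contDiffOn hU hρ hp) j)
    (hasDerivAt_field_path (diffAt_of_contDiffOn hU hu₁ hp) j)
    (hasDerivAt_field_path (diffAt_of_contDiffOn hU hu₂ hp) j)
    (hasDerivAt_field_path (diffAt_of_contDiffOn hU hu₃ hp) j)
    (hasDerivAt_field_path (diffAt_of_contDiffOn hU hT hp) j) j' k).deriv
  rw [update_self' p j] at h
  exact h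

lemma pt_Sfun (hU : IsOpen U) (hρ : ContDiffOn ℝ 2 ρ U) (hT : ContDiffOn ℝ 2 T U)
    (hpos : ∀ p ∈ U, 0 < ρ p ∧ 0 < T p) {p : P3} (hp : p ∈ U) :
    pt (fun p' => -(ρ p' * (cv * Real.log (T p') - R * Real.log (ρ p')))) p
      = Sd R cv (ρ p) (T p) (Dt' ρ p) (Dt' T p) := by
  have h := (hasDerivAt_S (R := R) (cv := cv)
    (hasDerivAt_field_tpath (diffAt_of_contDiffOn hU hρ hp))
    (hasDerivAt_field_tpath (diffAt_of_contDiffOn hU hT hp))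
    (by simpa only [Prod.mk.eta] using (hpos p hp).1.ne')
    (by simpa only [Prod.mk.eta] using (hpos p hp).2.ne')).deriv
  unfold pt
  simpa only [Prod.mk.eta] using h

lemma key_pointwise (hR : 0 < R) (hcv : 0 < cv) (hα : 0 < α) (hμ : 0 < μ)
    (hU : IsOpen U) (hρ : ContDiffOn ℝ 2 ρ U) (hu₁ : ContDiffOn ℝ 2 u₁ U)
    (hu₂ : ContDiffOn ℝ 2 u₂ U) (hu₃ : ContDiffOn ℝ 2 u₃ U) (hT : ContDiffOn ℝ 2 T U)
    (hpos : ∀ p ∈ U, 0 < ρ p ∧ 0 < T p)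
    (hpde : ∀ (k : Fin 5), ∀ p ∈ U,
      pt (fun p' => consVars cv (ρ p') (u₁ p') (u₂ p') (u₃ p') (T p') k) p
        + ∑ j : Fin 3,
            pd j (fun p' => invFlux R cv j (ρ p') (u₁ p') (u₂ p') (u₃ p') (T p') k) p
      = ∑ j : Fin 3,
          pd j (fun p' => (α * μ / ρ p') *
            pd j (fun p'' => consVars cv (ρ p'') (u₁ p'') (u₂ p'') (u₃ p'') (T p'') k) p') p)
    {p : P3} (hp : p ∈ U) :
    pt (fun p' => -(ρ p' * (cv * Real.log (T p') - R * Real.log (ρ p')))) p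
      ≤ ∑ j : Fin 3, pd j (bdryIntegrand R cv α μ ρ u₁ u₂ u₃ T j) p := by
  obtain ⟨hρp, hTp⟩ := hpos p hp
  set w : Fin 5 → ℝ := entropyVars R cv (ρ p) (u₁ p) (u₂ p) (u₃ p) (T p) with hw
  -- multiply the PDE by w and sum
  have H : ∑ k : Fin 5, w k *
        (pt (fun p' => consVars cv (ρ p') (u₁ p') (u₂ p') (u₃ p') (T p') k) p
          + ∑ j : Fin 3,
              pd j (fun p' => invFlux R cv j (ρ p') (u₁ p') (u₂ p') (u₃ p') (T p') k) p)
      = ∑ k : Fin 5, w k * ∑ j : Fin 3,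
          pd j (fun p' => (α * μ / ρ p') *
            pd j (fun p'' => consVars cv (ρ p'') (u₁ p'') (u₂ p'') (u₃ p'') (T p'') k) p') p :=
    Finset.sum_congr rfl fun k _ => by rw [hpde k p hp]
  -- left-hand side
  have hL : ∑ k : Fin 5, w k *
        (pt (fun p' => consVars cv (ρ p') (u₁ p') (u₂ p') (u₃ p') (T p') k) p
          + ∑ j : Fin 3,
              pd j (fun p' => invFlux R cv j (ρ p') (u₁ p') (u₂ p') (u₃ p') (T p') k) p)
      = pt (fun p' => -(ρ p' * (cv * Real.log (T p') - R * Real.log (ρ p')))) p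
        + ∑ j : Fin 3, Fd R cv (ρ p) (![u₁ p, u₂ p, u₃ p] j) (T p) (Dj ρ j p)
            (![Dj u₁ j p, Dj u₂ j p, Dj u₃ j p] j) (Dj T j p) := by
    simp only [mul_add, Finset.sum_add_distrib, Finset.mul_sum]
    congr 1
    · rw [pt_Sfun hU hρ hT hpos hp]
      rw [← alg1 R cv (ρ p) (u₁ p) (u₂ p) (u₃ p) (T p) (Dt' ρ p) (Dt' u₁ p) (Dt' u₂ p)
        (Dt' u₃ p) (Dt' T p) hρp.ne' hTp.ne']
      exact Finset.sum_congr rfl fun k _ => by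
        rw [pt_consVars hU hρ hu₁ hu₂ hu₃ hT hp k]
    · rw [Finset.sum_comm]
      refine Finset.sum_congr rfl fun j _ => ?_
      rw [← alg2 R cv (ρ p) (u₁ p) (u₂ p) (u₃ p) (T p) (Dj ρ j p) (Dj u₁ j p) (Dj u₂ j p)
        (Dj u₃ j p) (Dj T j p) j hρp.ne' hTp.ne']
      exact Finset.sum_congr rfl fun k _ => by
        rw [pd_invFlux hU hρ hu₁ hu₂ hu₃ hT hp j j k]
  -- right-hand side
  have hRHS : ∑ k : Fin 5, w k * ∑ j : Fin 3,
        pd j (fun p' => (α * μ / ρ p') *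
          pd j (fun p'' => consVars cv (ρ p'') (u₁ p'') (u₂ p'') (u₃ p'') (T p'') k) p') p
      = ∑ j : Fin 3, (pd j (bdryIntegrand R cv α μ ρ u₁ u₂ u₃ T j) p
          + Fd R cv (ρ p) (![u₁ p, u₂ p, u₃ p] j) (T p) (Dj ρ j p)
              (![Dj u₁ j p, Dj u₂ j p, Dj u₃ j p] j) (Dj T j p)
          - (α * μ / ρ p) * (R * Dj ρ j p ^ 2 / ρ p
              + ρ p * (Dj u₁ j p ^ 2 + Dj u₂ j p ^ 2 + Dj u₃ j p ^ 2) / T p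
              + ρ p * cv * Dj T j p ^ 2 / T p ^ 2)) := by
    simp only [Finset.mul_sum]
    rw [Finset.sum_comm]
    exact Finset.sum_congr rfl fun j _ =>
      visc_j hU hρ hu₁ hu₂ hu₃ hT hpos hp j
  rw [hL, hRHS] at H
  have hdiss : ∀ j : Fin 3, 0 ≤ (α * μ / ρ p) * (R * Dj ρ j p ^ 2 / ρ p
      + ρ p * (Dj u₁ j p ^ 2 + Dj u₂ j p ^ 2 + Dj u₃ j p ^ 2) / T p
      + ρ p * cv * Dj T j p ^ 2 / T p ^ 2) := fun j => by positivity
  have := Finset.sum_nonneg (fun j (_ : j ∈ Finset.univ) => hdiss j)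
  simp only [Finset.sum_sub_distrib, Finset.sum_add_distrib] at H
  linarith [H]

end key
end EE


open EE in
/-- entropy bound on the unit cube `Ω = (0,1)³` for the Eulerian
model.  If the fields are C² on a neighborhood `U` of the closure of
`Ω × [0, t₁]`, positive there, and solve the Eulerian model on `U`, then for
every time `t ∈ [0, t₁]` the time derivative of the total entropy is bounded by
the boundary integral
`d/dt ∫_Ω S dx ≤ Σ_j [ ∫_{x_j=1} (ν wᵀ ∂q/∂x_j - F_j) dσ - ∫_{x_j=0} (ν wᵀ ∂q/∂x_j - F_j) dσ ]`. -/
theorem eulerian_entropy_bound_unit_cube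
    (R cv α μ t₁ : ℝ) (hR : 0 < R) (hcv : 0 < cv) (hα : 0 < α) (hμ : 0 < μ)
    (ρ u₁ u₂ u₃ T : (Fin 3 → ℝ) × ℝ → ℝ)
    (U : Set ((Fin 3 → ℝ) × ℝ)) (hU : IsOpen U)
    (hUc : closure ((Set.univ.pi fun _ : Fin 3 => Set.Ioo (0 : ℝ) 1) ×ˢ Set.Icc 0 t₁) ⊆ U)
    (hρreg : ContDiffOn ℝ 2 ρ U) (hu₁reg : ContDiffOn ℝ 2 u₁ U)
    (hu₂reg : ContDiffOn ℝ 2 u₂ U) (hu₃reg : ContDiffOn ℝ 2 u₃ U)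
    (hTreg : ContDiffOn ℝ 2 T U)
    (hpos : ∀ p ∈ U, 0 < ρ p ∧ 0 < T p)
    (hpde : ∀ (k : Fin 5), ∀ p ∈ U,
      pt (fun p' => consVars cv (ρ p') (u₁ p') (u₂ p') (u₃ p') (T p') k) p
        + ∑ j : Fin 3,
            pd j (fun p' => invFlux R cv j (ρ p') (u₁ p') (u₂ p') (u₃ p') (T p') k) p
      = ∑ j : Fin 3,
          pd j (fun p' => (α * μ / ρ p') *
            pd j (fun p'' => consVars cv (ρ p'') (u₁ p'') (u₂ p'') (u₃ p'') (T p'') k) p') p) :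
    ∀ t ∈ Set.Icc (0 : ℝ) t₁,
      deriv (fun τ => ∫ x in Set.univ.pi fun _ : Fin 3 => Set.Ioo (0 : ℝ) 1,
          -(ρ (x, τ) * (cv * Real.log (T (x, τ)) - R * Real.log (ρ (x, τ))))) t
      ≤ ∑ j : Fin 3,
          ((∫ y in Set.univ.pi fun _ : Fin 2 => Set.Ioo (0 : ℝ) 1,
              bdryIntegrand R cv α μ ρ u₁ u₂ u₃ T j (j.insertNth 1 y, t))
           - ∫ y in Set.univ.pi fun _ : Fin 2 => Set.Ioo (0 : ℝ) 1,
              bdryIntegrand R cv α μ ρ u₁ u₂ u₃ T j (j.insertNth 0 y, t)) := by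
  intro t ht
  have hΩmeas : MeasurableSet (Set.univ.pi fun _ : Fin 3 => Set.Ioo (0 : ℝ) 1) :=
    MeasurableSet.univ_pi fun _ => measurableSet_Ioo
  have hΩIcc : closure ((Set.univ.pi fun _ : Fin 3 => Set.Ioo (0 : ℝ) 1) ×ˢ Set.Icc 0 t₁)
      = Set.Icc (0 : Fin 3 → ℝ) 1 ×ˢ Set.Icc 0 t₁ := by
    rw [closure_prod_eq, closure_Icc]
    congr 1
    rw [closure_pi_set]
    simp only [closure_Ioo (zero_ne_one (α := ℝ))]
    exact Set.pi_univ_Icc 0 1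
  have hKU : Set.Icc (0 : Fin 3 → ℝ) 1 ×ˢ Set.Icc 0 t₁ ⊆ U := hΩIcc ▸ hUc
  have hKc : IsCompact (Set.Icc (0 : Fin 3 → ℝ) 1 ×ˢ Set.Icc 0 t₁) :=
    isCompact_Icc.prod isCompact_Icc
  obtain ⟨δ, hδ, hthick⟩ := hKc.exists_thickening_subset_open hU hKU
  have hΩIcc' : (Set.univ.pi fun _ : Fin 3 => Set.Ioo (0 : ℝ) 1) ⊆ Set.Icc (0 : Fin 3 → ℝ) 1 := by
    intro x hx
    rw [← Set.pi_univ_Icc]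
    exact fun i hi => Set.Ioo_subset_Icc_self (hx i hi)
  have hmemU : ∀ x ∈ Set.Icc (0 : Fin 3 → ℝ) 1, ∀ τ : ℝ, dist τ t < δ → ((x, τ) : P3) ∈ U := by
    intro x hx τ hτ
    apply hthick
    rw [Metric.mem_thickening_iff]
    refine ⟨(x, t), Set.mem_prod.2 ⟨hx, ht⟩, ?_⟩
    have : dist ((x, τ) : P3) ((x, t) : P3) = dist τ t := by
      rw [Prod.dist_eq]
      simp only [dist_self]
      exact max_eq_right dist_nonneg
    rw [this]; exact hτ
  have hmemU' : ∀ x ∈ Set.Icc (0 : Fin 3 → ℝ) 1, ((x, t) : P3) ∈ U := fun x hx =>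
    hmemU x hx t (by simpa using hδ)
  -- regularity of the entropy and boundary expressions
  have hScd : ContDiffOn ℝ 1
      (fun p : P3 => -(ρ p * (cv * Real.log (T p) - R * Real.log (ρ p)))) U :=
    contDiffOn_Sfun hρreg hTreg hpos
  have hGcd : ∀ j : Fin 3, ContDiffOn ℝ 1 (Gexpr R cv α μ ρ u₁ u₂ u₃ T j) U := fun j =>
    contDiffOn_Gexpr hU hρreg hu₁reg hu₂reg hu₃reg hTreg hpos j
  have hSdcont : ContinuousOn
      (fun p : P3 => Dt' (fun p' => -(ρ p' * (cv * Real.log (T p') - R * Real.log (ρ p')))) p) U :=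
    (ContinuousLinearMap.apply ℝ ℝ Et).continuous.comp_continuousOn
      (hScd.continuousOn_fderiv_of_isOpen hU le_rfl)
  have hGdcont : ∀ j : Fin 3, ContinuousOn
      (fun p : P3 => fderiv ℝ (Gexpr R cv α μ ρ u₁ u₂ u₃ T j) p (Ej j)) U := fun j =>
    (ContinuousLinearMap.apply ℝ ℝ (Ej j)).continuous.comp_continuousOn
      ((hGcd j).continuousOn_fderiv_of_isOpen hU le_rfl)
  -- differentiation under the integral sign
  have hslicecont : ∀ τ : ℝ, dist τ t < δ → ContinuousOn
      (fun x : Fin 3 → ℝ => -(ρ (x, τ) * (cv * Real.log (T (x, τ)) - R * Real.log (ρ (x, τ)))))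
      (Set.Icc (0 : Fin 3 → ℝ) 1) := by
    intro τ hτ
    exact ContinuousOn.comp (f := fun x : Fin 3 → ℝ => ((x, τ) : P3)) hScd.continuousOn
      ((continuous_id.prodMk continuous_const).continuousOn)
      (fun x hx => hmemU x hx τ hτ)
  have hF'cont : ContinuousOn (fun x : Fin 3 → ℝ =>
      Dt' (fun p' => -(ρ p' * (cv * Real.log (T p') - R * Real.log (ρ p')))) (x, t))
      (Set.Icc (0 : Fin 3 → ℝ) 1) :=
    ContinuousOn.comp (f := fun x : Fin 3 → ℝ => ((x, t) : P3)) hSdcont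
      ((continuous_id.prodMk continuous_const).continuousOn) hmemU'
  obtain ⟨C, hC⟩ := (isCompact_Icc.prod (isCompact_closedBall t (δ/2))).exists_bound_of_continuousOn
    (hSdcont.mono (fun q hq => hmemU q.1 hq.1 q.2
      (lt_of_le_of_lt (Metric.mem_closedBall.1 hq.2) (by linarith))))
  have hvolfin : (volume (Set.univ.pi fun _ : Fin 3 => Set.Ioo (0 : ℝ) 1)) < ⊤ :=
    lt_of_le_of_lt (measure_mono hΩIcc') isCompact_Icc.measure_lt_top
  obtain ⟨-, hderiv⟩ := hasDerivAt_integral_of_dominated_loc_of_deriv_le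
    (μ := volume.restrict (Set.univ.pi fun _ : Fin 3 => Set.Ioo (0 : ℝ) 1))
    (F := fun τ x => -(ρ (x, τ) * (cv * Real.log (T (x, τ)) - R * Real.log (ρ (x, τ)))))
    (F' := fun τ x =>
      Dt' (fun p' => -(ρ p' * (cv * Real.log (T p') - R * Real.log (ρ p')))) (x, τ))
    (x₀ := t) (bound := fun _ => C) (Metric.ball_mem_nhds t (half_pos hδ))
    (by
      filter_upwards [Metric.ball_mem_nhds t hδ] with τ hτ
      exact ((hslicecont τ (by simpa [dist_comm] using hτ)).mono hΩIcc').aestronglyMeasurable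
        hΩmeas)
    (((hslicecont t (by simpa using hδ)).integrableOn_compact isCompact_Icc).mono_set hΩIcc')
    ((hF'cont.mono hΩIcc').aestronglyMeasurable hΩmeas)
    ((MeasureTheory.ae_restrict_mem hΩmeas).mono fun x hx τ hτ =>
      hC ((x, τ) : P3) ⟨hΩIcc' hx, Metric.mem_closedBall.2 (le_of_lt (by
        simpa [dist_comm] using Metric.mem_ball.1 hτ))⟩)
    ((integrableOn_const hvolfin.ne))
    ((MeasureTheory.ae_restrict_mem hΩmeas).mono fun x hx τ hτ =>
      hasDerivAt_field_tpath ((hScd.differentiableOn one_ne_zero).differentiableAt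
        (hU.mem_nhds (hmemU x (hΩIcc' hx) τ (lt_of_lt_of_le (Metric.mem_ball.1 hτ)
          (by linarith))))))
  rw [hderiv.deriv]
  -- pointwise bound, integrated over Ω, then divergence theorem
  have hgEj : ∀ j : Fin 3, ContinuousOn
      (fun x : Fin 3 → ℝ => fderiv ℝ (Gexpr R cv α μ ρ u₁ u₂ u₃ T j) ((x, t) : P3) (Ej j))
      (Set.Icc (0 : Fin 3 → ℝ) 1) := fun j =>
    ContinuousOn.comp (f := fun x : Fin 3 → ℝ => ((x, t) : P3)) (hGdcont j)
      ((continuous_id.prodMk continuous_const).continuousOn) hmemU'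
  have hgcont : ContinuousOn
      (fun x : Fin 3 → ℝ => ∑ j : Fin 3,
        fderiv ℝ (Gexpr R cv α μ ρ u₁ u₂ u₃ T j) ((x, t) : P3) (Ej j))
      (Set.Icc (0 : Fin 3 → ℝ) 1) := by
    apply continuousOn_finset_sum
    exact fun j _ => hgEj j
  -- pointwise inequality on Ω
  have hpoint : ∀ x ∈ (Set.univ.pi fun _ : Fin 3 => Set.Ioo (0 : ℝ) 1),
      Dt' (fun p' => -(ρ p' * (cv * Real.log (T p') - R * Real.log (ρ p')))) (x, t)
        ≤ ∑ j : Fin 3, fderiv ℝ (Gexpr R cv α μ ρ u₁ u₂ u₃ T j) ((x, t) : P3) (Ej j) := by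
    intro x hx
    have hpU : ((x, t) : P3) ∈ U := hmemU' x (hΩIcc' hx)
    have h1 : Dt' (fun p' => -(ρ p' * (cv * Real.log (T p') - R * Real.log (ρ p')))) (x, t)
        = pt (fun p' => -(ρ p' * (cv * Real.log (T p') - R * Real.log (ρ p')))) ((x, t) : P3) :=
      ((hasDerivAt_field_tpath ((hScd.differentiableOn one_ne_zero).differentiableAt
        (hU.mem_nhds hpU))).deriv).symm
    rw [h1]
    refine le_trans (key_pointwise hR hcv hα hμ hU hρreg hu₁reg hu₂reg hu₃reg hTreg hpos hpde
      hpU) (le_of_eq (Finset.sum_congr rfl fun j _ => ?_))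
    have hev : bdryIntegrand R cv α μ ρ u₁ u₂ u₃ T j =ᶠ[nhds ((x, t) : P3)]
        Gexpr R cv α μ ρ u₁ u₂ u₃ T j :=
      Filter.eventuallyEq_of_mem (hU.mem_nhds hpU)
        (fun q hq => bdry_eq_Gexpr hU hρreg hu₁reg hu₂reg hu₃reg hTreg j hq)
    rw [pd_congr_nhds j hev]
    exact pd_eq_of_hasFDerivAt j (((hGcd j).differentiableOn one_ne_zero).differentiableAt
      (hU.mem_nhds hpU)).hasFDerivAt
  have hIntLHS : IntegrableOn (fun x : Fin 3 → ℝ =>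
      Dt' (fun p' => -(ρ p' * (cv * Real.log (T p') - R * Real.log (ρ p')))) (x, t))
      (Set.univ.pi fun _ : Fin 3 => Set.Ioo (0 : ℝ) 1) :=
    (hF'cont.integrableOn_compact isCompact_Icc).mono_set hΩIcc'
  have hIntRHS : IntegrableOn (fun x : Fin 3 → ℝ => ∑ j : Fin 3,
      fderiv ℝ (Gexpr R cv α μ ρ u₁ u₂ u₃ T j) ((x, t) : P3) (Ej j))
      (Set.univ.pi fun _ : Fin 3 => Set.Ioo (0 : ℝ) 1) :=
    (hgcont.integrableOn_compact isCompact_Icc).mono_set hΩIcc'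
  have step1 := MeasureTheory.setIntegral_mono_on hIntLHS hIntRHS hΩmeas hpoint
  refine le_trans step1 (le_of_eq ?_)
  -- ae equality of the open and closed boxes
  have haeeq3 : (Set.univ.pi fun _ : Fin 3 => Set.Ioo (0 : ℝ) 1)
      =ᶠ[MeasureTheory.ae (volume : Measure (Fin 3 → ℝ))] Set.Icc (0 : Fin 3 → ℝ) 1 := by
    rw [MeasureTheory.volume_pi]
    exact MeasureTheory.Measure.univ_pi_Ioo_ae_eq_Icc
  have haeeq2 : (Set.univ.pi fun _ : Fin 2 => Set.Ioo (0 : ℝ) 1)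
      =ᶠ[MeasureTheory.ae (volume : Measure (Fin 2 → ℝ))] Set.Icc (0 : Fin 2 → ℝ) 1 := by
    rw [MeasureTheory.volume_pi]
    exact MeasureTheory.Measure.univ_pi_Ioo_ae_eq_Icc
  rw [MeasureTheory.setIntegral_congr_set haeeq3]
  -- divergence theorem on the closed unit cube
  have hdiv := MeasureTheory.integral_divergence_of_hasFDerivAt_off_countable'
    (0 : Fin 3 → ℝ) (1 : Fin 3 → ℝ) (fun i => by norm_num)
    (fun j x => Gexpr R cv α μ ρ u₁ u₂ u₃ T j ((x, t) : P3))
    (fun j x => (fderiv ℝ (Gexpr R cv α μ ρ u₁ u₂ u₃ T j) ((x, t) : P3)).comp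
      (ContinuousLinearMap.inl ℝ (Fin 3 → ℝ) ℝ))
    ∅ Set.countable_empty
    (fun i => ContinuousOn.comp (f := fun x : Fin 3 → ℝ => ((x, t) : P3))
      (hGcd i).continuousOn ((continuous_id.prodMk continuous_const).continuousOn) hmemU')
    (fun x hx i => HasFDerivAt.comp (g := Gexpr R cv α μ ρ u₁ u₂ u₃ T i) x
      ((((hGcd i).differentiableOn one_ne_zero).differentiableAt
        (hU.mem_nhds (hmemU' x (hΩIcc' hx.1)))).hasFDerivAt)
      (hasFDerivAt_prodMk_left (𝕜 := ℝ) x t))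
    ((hgcont.integrableOn_compact isCompact_Icc))
  refine Eq.trans ?_ (Eq.trans hdiv ?_)
  · rfl
  refine Finset.sum_congr rfl fun j _ => ?_
  have hface : ∀ c : ℝ, c ∈ Set.Icc (0 : ℝ) 1 →
      (∫ y in Set.Icc ((0 : Fin 3 → ℝ) ∘ j.succAbove) ((1 : Fin 3 → ℝ) ∘ j.succAbove),
          Gexpr R cv α μ ρ u₁ u₂ u₃ T j ((j.insertNth c y, t) : P3))
        = ∫ y in Set.univ.pi fun _ : Fin 2 => Set.Ioo (0 : ℝ) 1,
            bdryIntegrand R cv α μ ρ u₁ u₂ u₃ T j ((j.insertNth c y, t) : P3) := by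
    intro c hc
    show (∫ y in Set.Icc (0 : Fin 2 → ℝ) 1,
        Gexpr R cv α μ ρ u₁ u₂ u₃ T j ((j.insertNth c y, t) : P3)) = _
    rw [MeasureTheory.setIntegral_congr_fun
      (s := Set.Icc (0 : Fin 2 → ℝ) 1)
      (f := fun y : Fin 2 → ℝ => Gexpr R cv α μ ρ u₁ u₂ u₃ T j ((j.insertNth c y, t) : P3))
      (g := fun y : Fin 2 → ℝ => bdryIntegrand R cv α μ ρ u₁ u₂ u₃ T j ((j.insertNth c y, t) : P3))
      measurableSet_Icc
      (fun y hy => (bdry_eq_Gexpr hU hρreg hu₁reg hu₂reg hu₃reg hTreg j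
        (hmemU' _ (Fin.insertNth_mem_Icc.2 ⟨hc, hy⟩))).symm),
      ← MeasureTheory.setIntegral_congr_set haeeq2]
  rw [hface ((1 : Fin 3 → ℝ) j) (by norm_num), hface ((0 : Fin 3 → ℝ) j) (by norm_num)]
  simp only [Pi.one_apply, Pi.zero_apply]
end
end

section
/- Interior-penalty term identity at a no-slip wall: let v = (ρ, u₁, u₂, u₃, T) with ρ > 0, T > 0, let u^wall ∈ ℝ³ be the wall velocity, and define the manufactured viscous boundary state v^b = (ρ, −u₁ + 2u₁^wall, −u₂ + 2u₂^wall, −u₃ + 2u₃^wall, T). Set Δw = w(v) − w(v^b), ν = αμ/ρ with α > 0, μ > 0, and define the viscous flux states f(ṽ) = ν · M(ṽ) · Δw for ṽ ∈ {v, v^b}, and the interior-penalty term 𝓜 = −β (f(v) + f(v^b))/2 with β > 0. Then w(v)ᵀ 𝓜 = −(2βαμ/(R T²)) · ‖ΔU‖² · (‖ΔU‖² + R T), where ΔU = (u₁ − u₁^wall, u₂ − u₂^wall, u₃ − u₃^wall) and ‖ΔU‖ is its Euclidean norm. -/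
open Matrix

set_option maxHeartbeats 4000000
noncomputable section

/-- interior-penalty term identity at a no-slip wall.  With
`v = (ρ, u₁, u₂, u₃, T)` (`ρ > 0`, `T > 0`), wall velocity
`u^wall = (w₁, w₂, w₃)`, manufactured viscous boundary state
`v^b = (ρ, -u₁ + 2w₁, -u₂ + 2w₂, -u₃ + 2w₃, T)`, `Δw = w(v) - w(v^b)`,
`ν = αμ/ρ`, viscous flux states `f(ṽ) = ν M(ṽ) Δw` for `ṽ ∈ {v, v^b}`, and
interior-penalty term `𝓜 = -β (f(v) + f(v^b))/2` with `β > 0`, one has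
`w(v)ᵀ 𝓜 = -(2βαμ/(R T²)) ‖ΔU‖² (‖ΔU‖² + R T)` with
`‖ΔU‖² = (u₁-w₁)² + (u₂-w₂)² + (u₃-w₃)²`. -/
theorem interior_penalty_identity
    (R cv α μ β : ℝ) (hR : 0 < R) (hcv : 0 < cv)
    (hα : 0 < α) (hμ : 0 < μ) (hβ : 0 < β)
    (ρ u₁ u₂ u₃ T w₁ w₂ w₃ : ℝ) (hρ : 0 < ρ) (hT : 0 < T)
    (Δw 𝓜 : Fin 5 → ℝ)
    (hΔw : Δw = entropyVars R cv ρ u₁ u₂ u₃ T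
        - entropyVars R cv ρ (-u₁ + 2 * w₁) (-u₂ + 2 * w₂) (-u₃ + 2 * w₃) T)
    (h𝓜 : 𝓜 = -(β / 2) •
        ((α * μ / ρ) • (Mmat R (cv + R) ρ u₁ u₂ u₃ T *ᵥ Δw)
          + (α * μ / ρ) •
            (Mmat R (cv + R) ρ (-u₁ + 2 * w₁) (-u₂ + 2 * w₂) (-u₃ + 2 * w₃) T *ᵥ Δw))) :
    entropyVars R cv ρ u₁ u₂ u₃ T ⬝ᵥ 𝓜
      = -(2 * β * α * μ / (R * T ^ 2))
          * ((u₁ - w₁) ^ 2 + (u₂ - w₂) ^ 2 + (u₃ - w₃) ^ 2)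
          * (((u₁ - w₁) ^ 2 + (u₂ - w₂) ^ 2 + (u₃ - w₃) ^ 2) + R * T) := by
  subst hΔw h𝓜
  simp only [entropyVars, Mmat, dotProduct, mulVec, Pi.sub_apply, Pi.smul_apply,
    Pi.add_apply, Fin.sum_univ_five, Matrix.cons_val', Matrix.cons_val_zero,
    Matrix.cons_val_one, Matrix.head_cons, Matrix.empty_val',
    Matrix.cons_val_fin_one, Matrix.head_fin_const, Matrix.cons_val_succ,
    smul_eq_mul, Matrix.cons_val_four, Matrix.cons_val_three, Matrix.cons_val_two,
    Matrix.tail_cons, Matrix.of_apply]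
  have hT' := hT.ne'
  have hR' := hR.ne'
  have hρ' := hρ.ne'
  field_simp
  ring
end
end

section
/- The interior-penalty term is entropy dissipative: with v = (ρ, u₁, u₂, u₃, T), ρ > 0, T > 0, wall velocity u^wall ∈ ℝ³, manufactured state v^b = (ρ, −u₁ + 2u₁^wall, −u₂ + 2u₂^wall, −u₃ + 2u₃^wall, T), Δw = w(v) − w(v^b), ν = αμ/ρ, viscous flux states f(ṽ) = ν · M(ṽ) · Δw for ṽ ∈ {v, v^b}, and 𝓜 = −β (f(v) + f(v^b))/2, the entropy contribution of the penalty is nonpositive: w(v)ᵀ 𝓜 ≤ 0, for all positive parameters α, μ, β, R, c_v (with c_p = c_v + R); it vanishes if and only if the velocity jump u − u^wall is zero. -/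
set_option maxHeartbeats 2000000


open Matrix

noncomputable section

/-- the interior-penalty term is entropy dissipative.  With
`v = (ρ, u₁, u₂, u₃, T)` (`ρ > 0`, `T > 0`), wall velocity
`u^wall = (w₁, w₂, w₃)`, manufactured state
`v^b = (ρ, -u₁ + 2w₁, -u₂ + 2w₂, -u₃ + 2w₃, T)`, `Δw = w(v) - w(v^b)`,
`ν = αμ/ρ`, viscous flux states `f(ṽ) = ν M(ṽ) Δw` for `ṽ ∈ {v, v^b}`, and
`𝓜 = -β (f(v) + f(v^b))/2`, the entropy contribution of the penalty is
nonpositive, `w(v)ᵀ 𝓜 ≤ 0`, for all positive parameters `α, μ, β, R, c_v`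
(with `c_p = c_v + R`); it vanishes if and only if the velocity jump
`u - u^wall` is zero. -/
theorem interior_penalty_dissipative
    (R cv α μ β : ℝ) (hR : 0 < R) (hcv : 0 < cv)
    (hα : 0 < α) (hμ : 0 < μ) (hβ : 0 < β)
    (ρ u₁ u₂ u₃ T w₁ w₂ w₃ : ℝ) (hρ : 0 < ρ) (hT : 0 < T)
    (Δw 𝓜 : Fin 5 → ℝ)
    (hΔw : Δw = entropyVars R cv ρ u₁ u₂ u₃ T
        - entropyVars R cv ρ (-u₁ + 2 * w₁) (-u₂ + 2 * w₂) (-u₃ + 2 * w₃) T)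
    (h𝓜 : 𝓜 = -(β / 2) •
        ((α * μ / ρ) • (Mmat R (cv + R) ρ u₁ u₂ u₃ T *ᵥ Δw)
          + (α * μ / ρ) •
            (Mmat R (cv + R) ρ (-u₁ + 2 * w₁) (-u₂ + 2 * w₂) (-u₃ + 2 * w₃) T *ᵥ Δw))) :
    entropyVars R cv ρ u₁ u₂ u₃ T ⬝ᵥ 𝓜 ≤ 0 ∧
    (entropyVars R cv ρ u₁ u₂ u₃ T ⬝ᵥ 𝓜 = 0 ↔ u₁ = w₁ ∧ u₂ = w₂ ∧ u₃ = w₃) := by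
  subst hΔw h𝓜
  have hT' : T ≠ 0 := ne_of_gt hT
  have hR' : R ≠ 0 := ne_of_gt hR
  set D : ℝ := (u₁ - w₁) ^ 2 + (u₂ - w₂) ^ 2 + (u₃ - w₃) ^ 2 with hD
  have key : entropyVars R cv ρ u₁ u₂ u₃ T ⬝ᵥ
      (-(β / 2) •
        ((α * μ / ρ) • (Mmat R (cv + R) ρ u₁ u₂ u₃ T *ᵥ
            (entropyVars R cv ρ u₁ u₂ u₃ T
              - entropyVars R cv ρ (-u₁ + 2 * w₁) (-u₂ + 2 * w₂) (-u₃ + 2 * w₃) T))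
          + (α * μ / ρ) •
            (Mmat R (cv + R) ρ (-u₁ + 2 * w₁) (-u₂ + 2 * w₂) (-u₃ + 2 * w₃) T *ᵥ
            (entropyVars R cv ρ u₁ u₂ u₃ T
              - entropyVars R cv ρ (-u₁ + 2 * w₁) (-u₂ + 2 * w₂) (-u₃ + 2 * w₃) T))))
      = -(2 * α * μ * β / T) * (1 + D / (R * T)) * D := by
    simp only [entropyVars, Mmat, Matrix.mulVec, dotProduct, Fin.sum_univ_five,
      Pi.sub_apply, Pi.add_apply, Pi.smul_apply, smul_eq_mul,
      Matrix.cons_val_zero, Matrix.cons_val_one, Matrix.head_cons,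
      Matrix.cons_val', Matrix.cons_val_fin_one, Matrix.empty_val',
      Matrix.head_fin_const, Matrix.of_apply,
      Matrix.cons_val_two, Matrix.cons_val_three, Matrix.cons_val_four,
      Matrix.tail_cons, Matrix.head_cons, hD]

    have hρ' : ρ ≠ 0 := ne_of_gt hρ
    field_simp
    ring
  rw [key]
  have hc : 0 < 2 * α * μ * β / T := by positivity
  have hf : 0 < 1 + D / (R * T) := by positivity
  have hD0 : 0 ≤ D := by rw [hD]; positivity
  have hE : 0 < (2 * α * μ * β / T) * (1 + D / (R * T)) := mul_pos hc hf
  have heq : -(2 * α * μ * β / T) * (1 + D / (R * T)) * D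
      = -((2 * α * μ * β / T) * (1 + D / (R * T)) * D) := by ring
  rw [heq]
  constructor
  · exact neg_nonpos.mpr (mul_nonneg hE.le hD0)
  · rw [neg_eq_zero, mul_eq_zero]
    constructor
    · rintro (h | h)
      · exact absurd h hE.ne'
      · rw [hD] at h
        refine ⟨?_, ?_, ?_⟩ <;>
          · rw [← sub_eq_zero]
            nlinarith [sq_nonneg (u₁ - w₁), sq_nonneg (u₂ - w₂), sq_nonneg (u₃ - w₃)]
    · rintro ⟨h1, h2, h3⟩
      right
      rw [hD, h1, h2, h3]
      ring
end
end
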